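/- arXiv:2104.11656 — 10 statements merged into one kernel-verified Lean document; each statement's English description precedes it below -/
import Mathlib

section
/- Let H be a separable Hilbert space, K a bounded operator on H, and {f_j} a K-frame for H with frame operator S. If K has closed range and S(R(K)) = R(K), then {S^{-1/2} P_{R(K)} f_j} is a Parseval frame for R(K), i.e., for every f in R(K), the sum over j of |⟨f, S^{-1/2} P_{R(K)} f_j⟩|² equals ‖f‖². -/
open scoped ComplexInnerProductSpace
open ContinuousLinearMap

/-- If `{f_j}` is a `K`-frame for `H` with frame operator `S`, `K` has closed range and
`S(R(K)) = R(K)`, then `{S^{-1/2} P_{R(K)} f_j}` is a Parseval frame for `R(K)`.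
Here `P` is the orthogonal projection onto `R(K)` and `Sr` is the (positive, self-adjoint)
square root of the inverse of `S` restricted to `R(K)`. -/
theorem stmt_0 {H : Type*} [NormedAddCommGroup H] [InnerProductSpace ℂ H] [CompleteSpace H]
    {J : Type} (K S Sr P : H →L[ℂ] H) (f : J → H)
    (hclosed : IsClosed (Set.range K))
    (hframe : ∃ A B : ℝ, 0 < A ∧ A ≤ B ∧ ∀ x : H,
      Summable (fun j => ‖⟪f j, x⟫‖ ^ 2) ∧
      A * ‖ContinuousLinearMap.adjoint K x‖ ^ 2 ≤ ∑' j, ‖⟪f j, x⟫‖ ^ 2 ∧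
      ∑' j, ‖⟪f j, x⟫‖ ^ 2 ≤ B * ‖x‖ ^ 2)
    (hS : ∀ x : H, HasSum (fun j => ⟪f j, x⟫ • f j) (S x))
    (hSrange : S '' Set.range K = Set.range K)
    (hP_idem : P ∘L P = P) (hP_sa : ContinuousLinearMap.adjoint P = P)
    (hP_range : Set.range P = Set.range K)
    (hSr_mem : ∀ x ∈ Set.range K, Sr x ∈ Set.range K)
    (hSr_sa : ContinuousLinearMap.adjoint Sr = Sr)
    (hSr_pos : ∀ x : H, 0 ≤ (⟪x, Sr x⟫).re)
    (hSr_inv : ∀ x ∈ Set.range K, S (Sr (Sr x)) = x ∧ Sr (Sr (S x)) = x) :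
    ∀ x ∈ Set.range K, HasSum (fun j => ‖⟪Sr (P (f j)), x⟫‖ ^ 2) (‖x‖ ^ 2) := by
  intro x hx
  set y := Sr x with hy
  have hyK : y ∈ Set.range K := hSr_mem x hx
  have hPy : P y = y := by
    rw [← hP_range] at hyK
    obtain ⟨w, hw⟩ := hyK
    rw [← hw, ← ContinuousLinearMap.comp_apply, hP_idem]
  have hyK : y ∈ Set.range K := hSr_mem x hx
  -- each term equals ‖⟪f j, y⟫‖ ^ 2
  have hterm : ∀ j, ⟪Sr (P (f j)), x⟫ = ⟪f j, y⟫ := by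
    intro j
    calc ⟪Sr (P (f j)), x⟫ = ⟪ContinuousLinearMap.adjoint Sr (P (f j)), x⟫ := by rw [hSr_sa]
      _ = ⟪P (f j), Sr x⟫ := ContinuousLinearMap.adjoint_inner_left _ _ _
      _ = ⟪ContinuousLinearMap.adjoint P (f j), y⟫ := by rw [hP_sa]
      _ = ⟪f j, P y⟫ := ContinuousLinearMap.adjoint_inner_left _ _ _
      _ = ⟪f j, y⟫ := by rw [hPy]
  -- Sr (S y) = x
  have hzK : S y ∈ Set.range K := by
    rw [← hSrange]; exact ⟨y, hyK, rfl⟩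
  have hSrz : Sr (Sr (S y)) = Sr x := (hSr_inv y hyK).2
  have hkey : Sr (S y) = x := by
    have h1 : Sr (Sr (Sr (S y))) = Sr (Sr x) := congrArg Sr hSrz
    have h2 : S (Sr (Sr (Sr (S y)))) = S (Sr (Sr x)) := congrArg S h1
    rwa [(hSr_inv (Sr (S y)) (hSr_mem _ hzK)).1, (hSr_inv x hx).1] at h2
  -- inner product identity
  have hinner : ⟪y, S y⟫ = ((‖x‖ ^ 2 : ℝ) : ℂ) := by
    calc ⟪y, S y⟫ = ⟪ContinuousLinearMap.adjoint Sr x, S y⟫ := by rw [hSr_sa]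
      _ = ⟪x, Sr (S y)⟫ := ContinuousLinearMap.adjoint_inner_left _ _ _
      _ = ⟪x, x⟫ := by rw [hkey]
      _ = ((‖x‖ ^ 2 : ℝ) : ℂ) := by
          rw [inner_self_eq_norm_sq_to_K]; norm_cast
  -- sum computation
  have hsum : HasSum (fun j => ⟪y, ⟪f j, y⟫ • f j⟫) ⟪y, S y⟫ :=
    (innerSL ℂ y).hasSum (hS y)
  have hsum2 : HasSum (fun j => ((‖⟪f j, y⟫‖ ^ 2 : ℝ) : ℂ)) ((‖x‖ ^ 2 : ℝ) : ℂ) := by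
    rw [← hinner]
    convert hsum using 2 with j
    rw [inner_smul_right, ← inner_conj_symm y (f j)]
    rw [Complex.mul_conj']
    norm_cast
  have hsum3 : HasSum (fun j => ‖⟪f j, y⟫‖ ^ 2) (‖x‖ ^ 2) := by
    have := (Complex.reCLM.hasSum hsum2)
    simpa only [Complex.reCLM_apply, Complex.ofReal_re] using this
  simpa only [hterm] using hsum3
end

section
/- Let H be a separable Hilbert space, K a bounded operator on H with closed range, and {f_j} a K-frame for H with frame operator S such that S(R(K)) = R(K). Then {S^{-1/2} P_{R(K)} f_j} is a Parseval P_{R(K)}-frame for H, i.e., for every f in H, Σ_j |⟨f, S^{-1/2} P_{R(K)} f_j⟩|² = ‖P_{R(K)} f‖². -/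
open scoped ComplexInnerProductSpace
open ContinuousLinearMap

/-- If `{f_j}` is a `K`-frame for `H` with frame operator `S`, `K` has closed range and
`S(R(K)) = R(K)`, then `{S^{-1/2} P_{R(K)} f_j}` is a Parseval `P_{R(K)}`-frame for `H`:
for every `f ∈ H`, `Σ_j |⟨f, S^{-1/2} P_{R(K)} f_j⟩|² = ‖P_{R(K)} f‖²`. -/
theorem stmt_1 {H : Type*} [NormedAddCommGroup H] [InnerProductSpace ℂ H] [CompleteSpace H]
    {J : Type} (K S Sr P : H →L[ℂ] H) (f : J → H)
    (hclosed : IsClosed (Set.range K))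
    (hframe : ∃ A B : ℝ, 0 < A ∧ A ≤ B ∧ ∀ x : H,
      Summable (fun j => ‖⟪f j, x⟫‖ ^ 2) ∧
      A * ‖ContinuousLinearMap.adjoint K x‖ ^ 2 ≤ ∑' j, ‖⟪f j, x⟫‖ ^ 2 ∧
      ∑' j, ‖⟪f j, x⟫‖ ^ 2 ≤ B * ‖x‖ ^ 2)
    (hS : ∀ x : H, HasSum (fun j => ⟪f j, x⟫ • f j) (S x))
    (hSrange : S '' Set.range K = Set.range K)
    (hP_idem : P ∘L P = P) (hP_sa : ContinuousLinearMap.adjoint P = P)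
    (hP_range : Set.range P = Set.range K)
    (hSr_mem : ∀ x ∈ Set.range K, Sr x ∈ Set.range K)
    (hSr_sa : ContinuousLinearMap.adjoint Sr = Sr)
    (hSr_pos : ∀ x : H, 0 ≤ (⟪x, Sr x⟫).re)
    (hSr_inv : ∀ x ∈ Set.range K, S (Sr (Sr x)) = x ∧ Sr (Sr (S x)) = x) :
    ∀ x : H, HasSum (fun j => ‖⟪Sr (P (f j)), x⟫‖ ^ 2) (‖P x‖ ^ 2) := by
  intro x
  -- P fixes range K
  have hPfix : ∀ u ∈ Set.range K, P u = u := by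
    intro u hu
    rw [← hP_range] at hu
    obtain ⟨v, rfl⟩ := hu
    have := congrArg (fun T : H →L[ℂ] H => T v) hP_idem
    simpa using this
  set z := P x with hz
  have hzmem : z ∈ Set.range K := by rw [← hP_range]; exact ⟨x, rfl⟩
  set w := Sr z with hw
  have hwmem : w ∈ Set.range K := hSr_mem z hzmem
  have hSwmem : S w ∈ Set.range K := by
    rw [← hSrange]; exact Set.mem_image_of_mem _ hwmem
  -- Sr (S w) = z
  have hSrinj : ∀ a b, a ∈ Set.range K → b ∈ Set.range K → Sr a = Sr b → a = b := by
    intro a b ha hb hab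
    have h1 := (hSr_inv a ha).1
    have h2 := (hSr_inv b hb).1
    rw [← h1, ← h2, hab]
  have hkey : Sr (S w) = z := by
    apply hSrinj _ _ (hSr_mem _ hSwmem) hzmem
    have := (hSr_inv w hwmem).2
    rw [this]
  -- inner product identities
  have hPinner : ∀ u ∈ Set.range K, ⟪u, x⟫ = ⟪u, z⟫ := by
    intro u hu
    show ⟪u, x⟫ = ⟪u, P x⟫
    rw [← hP_sa, adjoint_inner_right, hPfix u hu]
  have hterm : ∀ j, ⟪Sr (P (f j)), x⟫ = ⟪f j, w⟫ := by
    intro j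
    have hmem : Sr (P (f j)) ∈ Set.range K := by
      apply hSr_mem
      rw [← hP_range]; exact ⟨f j, rfl⟩
    rw [hPinner _ hmem]
    rw [← hSr_sa, adjoint_inner_left]
    show ⟪P (f j), w⟫ = ⟪f j, w⟫
    rw [← hP_sa, adjoint_inner_left, hPfix w hwmem]
  -- ⟪w, S w⟫ = ⟪z, z⟫
  have hinner : ⟪w, S w⟫ = ⟪z, z⟫ := by
    rw [hw, ← hSr_sa, adjoint_inner_left, hSr_sa, hkey]
  -- the sum
  have h1 : HasSum (fun j => ⟪w, ⟪f j, w⟫ • f j⟫) ⟪w, S w⟫ := by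
    have := (hS w)
    exact (innerSL ℂ w).hasSum this
  have h2 : HasSum (fun j => ((‖⟪f j, w⟫‖ : ℂ) ^ 2)) ⟪z, z⟫ := by
    rw [← hinner]
    convert h1 using 2 with j
    rw [inner_smul_right]
    rw [← inner_conj_symm w (f j)]
    rw [Complex.mul_conj']
  have h3 : HasSum (fun j => ‖⟪f j, w⟫‖ ^ 2) (‖z‖ ^ 2) := by
    have := Complex.reCLM.hasSum h2
    convert this using 2 with j
    · simp [← Complex.ofReal_pow]
    · rw [inner_self_eq_norm_sq_to_K]
      simp [← Complex.ofReal_pow]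
  convert h3 using 2 with j
  rw [hterm j]
end

section
/- Let H be a separable Hilbert space, K ∈ B(H), and F = {f_1, …, f_M} a finite set of vectors in H each of norm ‖K‖. Then there exists a K-frame for H consisting entirely of vectors of norm ‖K‖ which contains the set F. Concretely, for each j choose an orthonormal basis {e_{ij}}_{i∈I} of H containing f_j/‖K‖; then {‖K‖ e_{ij}}_{1≤j≤M, i∈I} is a K-frame with bounds M and M‖K‖² containing F. -/
open scoped ComplexInnerProductSpace
open ContinuousLinearMap

lemma my_parseval {H : Type*} [NormedAddCommGroup H] [InnerProductSpace ℂ H]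
    {ι : Type*} (b : HilbertBasis ι ℂ H) (x : H) :
    Summable (fun i => ‖⟪b i, x⟫‖ ^ 2) ∧ ∑' i, ‖⟪b i, x⟫‖ ^ 2 = ‖x‖ ^ 2 := by
  have key : ∀ i, ⟪x, b i⟫ * ⟪b i, x⟫ = ((‖⟪b i, x⟫‖ ^ 2 : ℝ) : ℂ) := by
    intro i
    rw [← inner_conj_symm (b i) x, RCLike.mul_conj, RCLike.norm_conj]
    norm_cast
  have hs := b.summable_inner_mul_inner x x
  simp_rw [key] at hs
  have hsum : Summable (fun i => ‖⟪b i, x⟫‖ ^ 2) := by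
    have h2 := hs.map Complex.reCLM Complex.continuous_re
    simpa only [Function.comp_def, Complex.reCLM_apply, Complex.ofReal_re] using h2
  refine ⟨hsum, ?_⟩
  have ht := b.tsum_inner_mul_inner x x
  simp_rw [key] at ht
  rw [← Complex.ofReal_tsum, inner_self_eq_norm_sq_to_K, ← RCLike.ofReal_pow] at ht
  exact (RCLike.ofReal_inj (K := ℂ)).mp ht

lemma my_smul_parseval {H : Type*} [NormedAddCommGroup H] [InnerProductSpace ℂ H]
    {ι : Type*} (b : HilbertBasis ι ℂ H) (c : ℝ) (x : H) :
    Summable (fun i => ‖⟪c • b i, x⟫‖ ^ 2) ∧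
      ∑' i, ‖⟪c • b i, x⟫‖ ^ 2 = c ^ 2 * ‖x‖ ^ 2 := by
  have hpt : ∀ i, ‖⟪c • b i, x⟫‖ ^ 2 = c ^ 2 * ‖⟪b i, x⟫‖ ^ 2 := by
    intro i
    rw [RCLike.real_smul_eq_coe_smul (K := ℂ), inner_smul_left]
    simp [norm_mul, mul_pow, sq_abs]
  simp_rw [hpt]
  refine ⟨(my_parseval b x).1.mul_left _, ?_⟩
  rw [tsum_mul_left, (my_parseval b x).2]

lemma my_fiber {H : Type*} [NormedAddCommGroup H] [InnerProductSpace ℂ H]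
    {w : Set H} (b : HilbertBasis w ℂ H) (hb : ⇑b = ((↑) : w → H))
    {β : Type*} (e : w ≃ β) (c : ℝ) (x : H) :
    Summable (fun n : β => ‖⟪c • ((e.symm n : w) : H), x⟫‖ ^ 2) ∧
      ∑' n : β, ‖⟪c • ((e.symm n : w) : H), x⟫‖ ^ 2 = c ^ 2 * ‖x‖ ^ 2 := by
  have h := my_smul_parseval b c x
  rw [hb] at h
  obtain ⟨h1, h2⟩ := h
  refine ⟨(e.symm.summable_iff
      (f := fun v : w => ‖⟪c • (v : H), x⟫‖ ^ 2)).mpr h1, ?_⟩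
  rw [e.symm.tsum_eq (fun v : w => ‖⟪c • (v : H), x⟫‖ ^ 2)]
  exact h2

lemma my_countable {H : Type*} [NormedAddCommGroup H] [InnerProductSpace ℂ H]
    [TopologicalSpace.SeparableSpace H] {w : Set H}
    (hw : Orthonormal ℂ ((↑) : w → H)) : Countable w := by
  classical
  apply Pairwise.countable_of_isOpen_disjoint
    (s := fun v : w => Metric.ball (v : H) (1/2))
  · intro a c hac
    apply Metric.ball_disjoint_ball
    have hin : ⟪(a : H), (c : H)⟫ = 0 := by
      have := orthonormal_iff_ite.mp hw a c
      rwa [if_neg hac] at this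
    have h2 : dist (a : H) (c : H) ^ 2 = 2 := by
      rw [dist_eq_norm, @norm_sub_sq ℂ, hin, hw.1 a, hw.1 c]
      norm_num
    nlinarith [dist_nonneg (x := (a : H)) (y := (c : H))]
  · intro i; exact Metric.isOpen_ball
  · intro i; exact Metric.nonempty_ball.mpr (by norm_num)

set_option maxHeartbeats 1000000 in
/-- Every finite set `F = {f_1, …, f_M}` of vectors of norm `‖K‖` in a separable Hilbert
space `H` can be extended to a `K`-frame for `H` consisting entirely of vectors of norm
`‖K‖`, with frame bounds `M` and `M‖K‖²`. -/
theorem stmt_4 {H : Type*} [NormedAddCommGroup H] [InnerProductSpace ℂ H] [CompleteSpace H]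
    [TopologicalSpace.SeparableSpace H]
    (K : H →L[ℂ] H) (hK : K ≠ 0) {M : ℕ} (hM : 0 < M) (F : Fin M → H)
    (hF : ∀ i, ‖F i‖ = ‖K‖) :
    ∃ (J : Type) (g : J → H),
      (∀ j, ‖g j‖ = ‖K‖) ∧
      (∀ x : H, Summable (fun j => ‖⟪g j, x⟫‖ ^ 2)) ∧
      (∀ x : H,
        (M : ℝ) * ‖ContinuousLinearMap.adjoint K x‖ ^ 2 ≤ ∑' j, ‖⟪g j, x⟫‖ ^ 2 ∧
        ∑' j, ‖⟪g j, x⟫‖ ^ 2 ≤ ((M : ℝ) * ‖K‖ ^ 2) * ‖x‖ ^ 2) ∧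
      (∀ i, ∃ j, g j = F i) := by
  classical
  have hKn : (0 : ℝ) < ‖K‖ := norm_pos_iff.mpr hK
  set u : Fin M → H := fun i => ‖K‖⁻¹ • F i with hu
  have hunorm : ∀ i, ‖u i‖ = 1 := by
    intro i
    simp [hu, norm_smul, hF i, abs_of_pos (inv_pos.mpr hKn), inv_mul_cancel₀ hKn.ne']
  have horth : ∀ i, Orthonormal ℂ ((↑) : ({u i} : Set H) → H) := by
    intro i
    rw [orthonormal_iff_ite]
    rintro ⟨a, ha⟩ ⟨c, hc⟩
    simp only [Set.mem_singleton_iff] at ha hc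
    subst ha; subst hc
    simp [inner_self_eq_norm_sq_to_K, hunorm i]
  choose w b hw hb using fun i => (horth i).exists_hilbertBasis_extension
  have hcnt : ∀ i, Countable (w i) := fun i => by
    have h := (b i).orthonormal
    rw [hb i] at h
    exact my_countable h
  have hinj : ∀ i, ∃ f : w i → ℕ, Function.Injective f := fun i =>
    @exists_injective_nat _ (hcnt i)
  choose f hf using hinj
  let e : ∀ i, w i ≃ Set.range (f i) := fun i => Equiv.ofInjective (f i) (hf i)
  set g : (Σ i : Fin M, ↥(Set.range (f i))) → H :=
    fun p => (‖K‖ : ℝ) • (((e p.1).symm p.2 : w p.1) : H) with hg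
  have hfib := fun (i : Fin M) (x : H) => my_fiber (b i) (hb i) (e i) ‖K‖ x
  have hsummable : ∀ x : H, Summable (fun j => ‖⟪g j, x⟫‖ ^ 2) := by
    intro x
    rw [summable_sigma_of_nonneg (fun _ => by positivity)]
    exact ⟨fun i => (hfib i x).1, Summable.of_finite⟩
  have htot : ∀ x : H, ∑' j, ‖⟪g j, x⟫‖ ^ 2 = (M : ℝ) * (‖K‖ ^ 2 * ‖x‖ ^ 2) := by
    intro x
    rw [Summable.tsum_sigma (hsummable x)]
    have : ∀ i : Fin M,
        ∑' n : Set.range (f i), ‖⟪g ⟨i, n⟩, x⟫‖ ^ 2 = ‖K‖ ^ 2 * ‖x‖ ^ 2 :=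
      fun i => (hfib i x).2
    simp_rw [this]
    rw [tsum_fintype]
    simp [Finset.sum_const, Finset.card_univ]
  refine ⟨_, g, ?_, hsummable, ?_, ?_⟩
  · rintro ⟨i, n⟩
    have h1 : ‖((((e i).symm n : w i)) : H)‖ = 1 := by
      have ho := (b i).orthonormal
      rw [hb i] at ho
      exact ho.1 ((e i).symm n)
    simp [hg, norm_smul, h1, abs_of_pos hKn]
  · intro x
    rw [htot x]
    constructor
    · have hle : ‖ContinuousLinearMap.adjoint K x‖ ≤ ‖K‖ * ‖x‖ := by
        calc ‖ContinuousLinearMap.adjoint K x‖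
            ≤ ‖ContinuousLinearMap.adjoint K‖ * ‖x‖ :=
              (ContinuousLinearMap.adjoint K).le_opNorm x
          _ = ‖K‖ * ‖x‖ := by rw [ContinuousLinearMap.adjoint.norm_map K]
      have h2 : ‖ContinuousLinearMap.adjoint K x‖ ^ 2 ≤ ‖K‖ ^ 2 * ‖x‖ ^ 2 := by
        rw [← mul_pow]
        exact pow_le_pow_left₀ (norm_nonneg _) hle 2
      have hM0 : (0 : ℝ) ≤ (M : ℝ) := Nat.cast_nonneg M
      nlinarith [h2, hM0]
    · rw [mul_assoc]
  · intro i
    refine ⟨⟨i, (e i) ⟨u i, hw i (Set.mem_singleton _)⟩⟩, ?_⟩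
    simp only [hg, Equiv.symm_apply_apply]
    simp [hu, smul_smul, mul_inv_cancel₀ hKn.ne']
end

section
/- Let K ∈ B(H) have closed range with pseudo-inverse K† satisfying ‖K‖‖K†‖ = 1. Then for every f in the range R(K), ‖K*f‖ = ‖K‖‖f‖; consequently, given any finite set F of vectors in R(K) of norm ‖K‖, there is a tight K-frame for R(K) consisting of vectors of norm ‖K‖ that contains F. -/
open scoped ComplexInnerProductSpace
open ContinuousLinearMap

set_option maxHeartbeats 1000000

/-- If `K` has closed range and its pseudo-inverse `K†` satisfies `‖K‖ ‖K†‖ = 1`, then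
`‖K* f‖ = ‖K‖ ‖f‖` for all `f ∈ R(K)`; consequently any finite set of vectors of `R(K)`
of norm `‖K‖` extends to a tight `K`-frame for `R(K)` consisting of vectors of norm `‖K‖`. -/
theorem stmt_5 {H : Type*} [NormedAddCommGroup H] [InnerProductSpace ℂ H] [CompleteSpace H]
    [TopologicalSpace.SeparableSpace H]
    (K Kd : H →L[ℂ] H) (hK : K ≠ 0)
    (hclosed : IsClosed (Set.range K))
    (hKd : ∀ x ∈ Set.range K, K (Kd x) = x)
    (hnorm : ‖K‖ * ‖Kd‖ = 1) :
    (∀ x ∈ Set.range K, ‖ContinuousLinearMap.adjoint K x‖ = ‖K‖ * ‖x‖) ∧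
      ∀ (M : ℕ), 0 < M → ∀ F : Fin M → H, (∀ i, F i ∈ Set.range K) →
        (∀ i, ‖F i‖ = ‖K‖) →
        ∃ (J : Type) (g : J → H),
          (∀ j, g j ∈ Set.range K) ∧
          (∀ j, ‖g j‖ = ‖K‖) ∧
          (∃ A : ℝ, 0 < A ∧ ∀ x ∈ Set.range K,
            HasSum (fun j => ‖⟪g j, x⟫‖ ^ 2)
              (A * ‖ContinuousLinearMap.adjoint K x‖ ^ 2)) ∧
          (∀ i, ∃ j, g j = F i) := by
  have hKpos : 0 < ‖K‖ := by
    rcases lt_or_eq_of_le (norm_nonneg K) with h | h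
    · exact h
    · exfalso; rw [← h] at hnorm; simp at hnorm
  -- Part 1
  have part1 : ∀ x ∈ Set.range K, ‖ContinuousLinearMap.adjoint K x‖ = ‖K‖ * ‖x‖ := by
    intro x hx
    rcases eq_or_ne x 0 with rfl | hx0
    · simp
    have hxpos : 0 < ‖x‖ := norm_pos_iff.mpr hx0
    apply le_antisymm
    · calc ‖ContinuousLinearMap.adjoint K x‖ ≤ ‖ContinuousLinearMap.adjoint K‖ * ‖x‖ :=
            (ContinuousLinearMap.adjoint K).le_opNorm x
        _ = ‖K‖ * ‖x‖ := by rw [ContinuousLinearMap.adjoint.norm_map K]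
    · -- lower bound
      have h1 : ⟪ContinuousLinearMap.adjoint K x, Kd x⟫ = ⟪x, x⟫ := by
        rw [ContinuousLinearMap.adjoint_inner_left, hKd x hx]
      have h2 : ‖x‖ ^ 2 ≤ ‖ContinuousLinearMap.adjoint K x‖ * (‖Kd‖ * ‖x‖) := by
        have h3 : ‖⟪ContinuousLinearMap.adjoint K x, Kd x⟫‖ ≤
            ‖ContinuousLinearMap.adjoint K x‖ * ‖Kd x‖ := norm_inner_le_norm _ _
        have h4 : ‖Kd x‖ ≤ ‖Kd‖ * ‖x‖ := Kd.le_opNorm x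
        have h5 : ‖⟪x, x⟫‖ = ‖x‖ ^ 2 := by
          rw [@inner_self_eq_norm_sq_to_K ℂ, norm_pow, RCLike.norm_ofReal,
            abs_of_nonneg (norm_nonneg x)]
        rw [h1, h5] at h3
        calc ‖x‖ ^ 2 ≤ ‖ContinuousLinearMap.adjoint K x‖ * ‖Kd x‖ := h3
          _ ≤ ‖ContinuousLinearMap.adjoint K x‖ * (‖Kd‖ * ‖x‖) := by
              exact mul_le_mul_of_nonneg_left h4 (norm_nonneg _)
      have hKd' : ‖Kd‖ = ‖K‖⁻¹ := by
        field_simp at hnorm ⊢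
        linarith [hnorm]
      rw [hKd'] at h2
      rw [← mul_le_mul_iff_of_pos_right hxpos]
      calc ‖K‖ * ‖x‖ * ‖x‖ = ‖K‖ * ‖x‖ ^ 2 := by ring
        _ ≤ ‖K‖ * (‖ContinuousLinearMap.adjoint K x‖ * (‖K‖⁻¹ * ‖x‖)) :=
            mul_le_mul_of_nonneg_left h2 (norm_nonneg _)
        _ = ‖ContinuousLinearMap.adjoint K x‖ * ‖x‖ := by
            field_simp
  refine ⟨part1, ?_⟩
  intro M hM F hF hFn
  classical
  set c : ℝ := ‖K‖ with hc
  -- the range as a closed submodule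
  set W : Submodule ℂ H := LinearMap.range (K : H →ₗ[ℂ] H) with hW
  have hWr : (W : Set H) = Set.range K := by
    ext x; simp [hW, LinearMap.mem_range, Set.mem_range]
  have hWclosed : IsClosed (W : Set H) := hWr ▸ hclosed
  haveI : CompleteSpace W := hWclosed.completeSpace_coe
  haveI : SecondCountableTopology H := UniformSpace.secondCountable_of_separable H
  -- normalized vectors in W
  have hFW : ∀ i, F i ∈ W := fun i => by
    rw [← SetLike.mem_coe, hWr]; exact hF i
  have huW : ∀ i, (c : ℂ)⁻¹ • F i ∈ W := fun i => W.smul_mem _ (hFW i)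
  set u : Fin M → W := fun i => ⟨(c : ℂ)⁻¹ • F i, huW i⟩ with hu
  have hcC : (c : ℂ) ≠ 0 := by
    simp only [ne_eq, Complex.ofReal_eq_zero]; exact ne_of_gt hKpos
  have hun : ∀ i, ‖u i‖ = 1 := by
    intro i
    have : ‖(u i : H)‖ = ‖(c : ℂ)⁻¹ • F i‖ := rfl
    rw [show ‖u i‖ = ‖(u i : H)‖ from rfl, this, norm_smul, hFn i, norm_inv,
      Complex.norm_real, Real.norm_eq_abs, abs_of_pos hKpos]
    field_simp
  -- for each i, extend {u i} to a Hilbert basis of W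
  have hon : ∀ i, Orthonormal ℂ (Subtype.val : ({u i} : Set W) → W) := by
    intro i
    rw [orthonormal_subtype_iff_ite]
    intro v hv w hw
    simp only [Set.mem_singleton_iff] at hv hw
    subst hv; subst hw
    simp only [if_pos rfl]
    rw [@inner_self_eq_norm_sq_to_K ℂ, hun i]
    norm_num
  choose w b hsub hb using fun i => (hon i).exists_hilbertBasis_extension
  have hbv : ∀ i (v : w i), (b i) v = (v : W) := fun i v => congrFun (hb i) v
  have hwite : ∀ i, ∀ v ∈ w i, ∀ v' ∈ w i,
      ⟪v, v'⟫ = if v = v' then (1 : ℂ) else 0 := by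
    intro i
    have h := (b i).orthonormal
    rw [hb i] at h
    exact orthonormal_subtype_iff_ite.mp h
  have hwnorm : ∀ i, ∀ v ∈ w i, ‖(v : W)‖ = 1 := by
    intro i v hv
    have h := hwite i v hv v hv
    rw [if_pos rfl, @inner_self_eq_norm_sq_to_K ℂ] at h
    have h' : ((‖v‖ ^ 2 : ℝ) : ℂ) = ((1 : ℝ) : ℂ) := by push_cast; exact h
    have h2 : ‖v‖ ^ 2 = 1 := by exact_mod_cast h'
    nlinarith [norm_nonneg v]
  -- each w i is countable
  have hcw : ∀ i, (w i).Countable := by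
    intro i
    apply Set.PairwiseDisjoint.countable_of_isOpen
      (s := fun v : W => Metric.ball v (1/2))
    · intro v hv v' hv' hvv'
      apply Metric.ball_disjoint_ball
      have horth : ⟪v, v'⟫ = 0 := by
        have h := hwite i v hv v' hv'
        rwa [if_neg hvv'] at h
      have hdist : dist v v' ^ 2 = 2 := by
        rw [dist_eq_norm, @norm_sub_sq ℂ, horth, hwnorm i v hv, hwnorm i v' hv']
        norm_num
      nlinarith [dist_nonneg (x := v) (y := v')]
    · intro _ _; exact Metric.isOpen_ball
    · intro v _; exact ⟨v, Metric.mem_ball_self (by norm_num)⟩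
  -- injections into ℕ
  have : ∀ i, ∃ f : (w i) → ℕ, Function.Injective f := by
    intro i
    haveI : Countable (w i) := Set.countable_coe_iff.mpr (hcw i)
    exact (countable_iff_exists_injective _).mp ‹_›
  choose f hf using this
  set e : ∀ i, (w i) ≃ Set.range (f i) := fun i => Equiv.ofInjective (f i) (hf i) with he
  -- the index type and the frame
  refine ⟨(i : Fin M) × (Set.range (f i) : Set ℕ),
    fun j => (c : ℂ) • ((((e j.1).symm j.2 : w j.1) : W) : H), ?_, ?_, ?_, ?_⟩
  · intro j
    rw [← hWr]
    exact SetLike.mem_coe.mpr (W.smul_mem _ (SetLike.coe_mem _))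
  · intro j
    have h1 : ‖(((e j.1).symm j.2 : w j.1) : W)‖ = 1 :=
      hwnorm j.1 _ ((e j.1).symm j.2).property
    rw [norm_smul, show ‖(((((e j.1).symm j.2 : w j.1) : W)) : H)‖ =
      ‖((((e j.1).symm j.2 : w j.1)) : W)‖ from rfl, h1, Complex.norm_real,
      Real.norm_eq_abs, abs_of_pos hKpos, mul_one]
  · refine ⟨(M : ℝ), by exact_mod_cast hM, ?_⟩
    intro x hx
    have hxW : x ∈ W := by rw [← SetLike.mem_coe, hWr]; exact hx
    set xW : W := ⟨x, hxW⟩ with hxWdef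
    -- fiberwise sums
    have hfib : ∀ i : Fin M,
        HasSum (fun j : (Set.range (f i) : Set ℕ) =>
          ‖⟪(c : ℂ) • ((((e i).symm j : w i) : W) : H), x⟫‖ ^ 2) (c ^ 2 * ‖x‖ ^ 2) := by
      intro i
      have h0 : HasSum (fun v : (w i) => ⟪xW, (v : W)⟫ * ⟪(v : W), xW⟫) ⟪xW, xW⟫ := by
        simpa only [hbv i] using (b i).hasSum_inner_mul_inner xW xW
      have h1 : HasSum (fun v : (w i) => ‖⟪(v : W), xW⟫‖ ^ 2) (‖xW‖ ^ 2) := by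
        have h0' := h0.mapL Complex.reCLM
        simp only [Complex.reCLM_apply] at h0'
        have e1 : ∀ v : (w i), Complex.re (⟪xW, (v : W)⟫ * ⟪(v : W), xW⟫)
            = ‖⟪(v : W), xW⟫‖ ^ 2 := by
          intro v
          rw [← inner_conj_symm xW ((v : W)), mul_comm, Complex.mul_conj,
            Complex.ofReal_re, Complex.normSq_eq_norm_sq]
        have e2 : Complex.re ⟪xW, xW⟫ = ‖xW‖ ^ 2 := @inner_self_eq_norm_sq ℂ _ _ _ _ xW
        simpa only [e1, e2] using h0'
      have h2 : HasSum (fun j : (Set.range (f i) : Set ℕ) =>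
          ‖⟪(((e i).symm j : w i) : W), xW⟫‖ ^ 2) (‖xW‖ ^ 2) :=
        (Equiv.hasSum_iff (e i).symm).mpr h1
      have h4 : ∀ j : (Set.range (f i) : Set ℕ),
          ‖⟪(c : ℂ) • ((((e i).symm j : w i) : W) : H), x⟫‖ ^ 2
          = c ^ 2 * ‖⟪(((e i).symm j : w i) : W), xW⟫‖ ^ 2 := by
        intro j
        rw [inner_smul_left, norm_mul, mul_pow, RCLike.norm_conj, Complex.norm_real,
          Real.norm_eq_abs, abs_of_pos hKpos]
        congr 2
        all_goals rw [Submodule.coe_inner]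
      simpa only [h4, show ‖xW‖ = ‖x‖ from rfl] using h2.mul_left (c ^ 2)
    -- assemble the sigma sum
    set phi : ((i : Fin M) × (Set.range (f i) : Set ℕ)) → ℝ :=
      fun j => ‖⟪(c : ℂ) • ((((e j.1).symm j.2 : w j.1) : W) : H), x⟫‖ ^ 2 with hphi
    have hphinn : ∀ j, 0 ≤ phi j := fun j => by positivity
    have hsummable : Summable phi := by
      rw [summable_sigma_of_nonneg hphinn]
      refine ⟨fun i => (hfib i).summable, ?_⟩
      have hx2 : (fun i => ∑' j, phi ⟨i, j⟩) = fun _ : Fin M => c ^ 2 * ‖x‖ ^ 2 :=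
        funext fun i => (hfib i).tsum_eq
      rw [hx2]
      exact Summable.of_finite
    have htot := hsummable.hasSum
    have hg : HasSum (fun _ : Fin M => c ^ 2 * ‖x‖ ^ 2) (∑' j, phi j) :=
      htot.sigma hfib
    have hval : ∑' j, phi j = (M : ℝ) * (c ^ 2 * ‖x‖ ^ 2) := by
      have h5 := hg.unique (hasSum_fintype _)
      rw [h5]
      simp [Finset.sum_const, nsmul_eq_mul]
    have hval2 : (M : ℝ) * ‖ContinuousLinearMap.adjoint K x‖ ^ 2 = ∑' j, phi j := by
      rw [part1 x hx, hval]
      ring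
    rw [hval2]
    exact htot
  · intro i
    refine ⟨⟨i, e i ⟨u i, hsub i rfl⟩⟩, ?_⟩
    show (c : ℂ) • ((((e i).symm (e i ⟨u i, hsub i rfl⟩) : w i) : W) : H) = F i
    rw [Equiv.symm_apply_apply]
    show (c : ℂ) • ((c : ℂ)⁻¹ • F i) = F i
    rw [smul_inv_smul₀ hcC]
end

section
/- Let {f_j}_{j∈J} be a Parseval K-frame for a Hilbert space H where K has closed range. Then there exists a Hilbert space M containing R(K†) (the range of the pseudo-inverse of K) and an orthonormal basis {e_j}_{j∈J} of M such that, with P the orthogonal projection of M onto R(K†), one has f_j = K P e_j for every j ∈ J. -/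
open scoped ComplexInnerProductSpace
open ContinuousLinearMap

set_option maxHeartbeats 1600000

/-- A Naimark-type dilation for a Parseval `K`-frame: a Hilbert space `M` containing
(an isometric copy of) `R(K†)`, an orthonormal basis `{e_j}` of `M` and the orthogonal
projection `P` of `M` onto `R(K†)` such that `f_j = K P e_j` for all `j`. -/
structure NaimarkKDilation {H : Type*} [NormedAddCommGroup H] [InnerProductSpace ℂ H]
    [CompleteSpace H] {J : Type} (K Kd : H →L[ℂ] H) (f : J → H) where
  M : Type
  [instN : NormedAddCommGroup M]
  [instI : InnerProductSpace ℂ M]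
  [instC : CompleteSpace M]
  emb : (LinearMap.range (Kd : H →ₗ[ℂ] H) : Submodule ℂ H) →ₗᵢ[ℂ] M
  basis : HilbertBasis J ℂ M
  proj : M →L[ℂ] M
  proj_idem : proj ∘L proj = proj
  proj_sa : ContinuousLinearMap.adjoint proj = proj
  proj_range : Set.range proj = Set.range emb
  frame_eq : ∀ j, ∃ w : (LinearMap.range (Kd : H →ₗ[ℂ] H) : Submodule ℂ H),
    emb w = proj (basis j) ∧ f j = K w

/-- If `{f_j}` is a Parseval `K`-frame for `H` and `K` has closed range, then there exist a
Hilbert space `M ⊇ R(K†)` and an orthonormal basis `{e_j}` of `M` such that `f_j = K P e_j`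
where `P` is the orthogonal projection of `M` onto `R(K†)`. -/
theorem stmt_6 {H : Type*} [NormedAddCommGroup H] [InnerProductSpace ℂ H] [CompleteSpace H]
    [TopologicalSpace.SeparableSpace H] {J : Type} [Countable J]
    (K Kd : H →L[ℂ] H) (f : J → H)
    (hclosed : IsClosed (Set.range K))
    (hKd : ∀ x ∈ Set.range K, K (Kd x) = x)
    (hKdrange : LinearMap.range (Kd : H →ₗ[ℂ] H) = (LinearMap.ker (K : H →ₗ[ℂ] H))ᗮ)
    (hParseval : ∀ x : H,
      HasSum (fun j => ‖⟪f j, x⟫‖ ^ 2) (‖ContinuousLinearMap.adjoint K x‖ ^ 2)) :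
    Nonempty (NaimarkKDilation K Kd f) := by
  classical
  set N : Submodule ℂ H := LinearMap.range (Kd : H →ₗ[ℂ] H) with hN
  have hNclosed : IsClosed (N : Set H) := by
    rw [hKdrange]; exact Submodule.isClosed_orthogonal _
  haveI : CompleteSpace N := hNclosed.completeSpace_coe
  haveI : CompleteSpace (LinearMap.ker (K : H →ₗ[ℂ] H)) :=
    (ContinuousLinearMap.isClosed_ker K).completeSpace_coe
  -- the range of K as a submodule, complete
  haveI : CompleteSpace (LinearMap.range (K : H →ₗ[ℂ] H)) := by
    have : IsClosed ((LinearMap.range (K : H →ₗ[ℂ] H) : Submodule ℂ H) : Set H) := by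
      rwa [LinearMap.coe_range]
    exact this.completeSpace_coe
  -- each f j lies in the range of K
  have hfj : ∀ j, f j ∈ LinearMap.range (K : H →ₗ[ℂ] H) := by
    intro j
    have horth : f j ∈ (LinearMap.range (K : H →ₗ[ℂ] H))ᗮᗮ := by
      rw [Submodule.mem_orthogonal]
      intro y hy
      have hKy : adjoint K y = 0 := by
        apply ext_inner_right ℂ
        intro x
        rw [adjoint_inner_left, inner_zero_left]
        exact (Submodule.mem_orthogonal' _ _).mp hy _ (LinearMap.mem_range_self _ x)
      have h0 := hParseval y
      rw [hKy, norm_zero] at h0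
      simp only [ne_eq, OfNat.ofNat_ne_zero, not_false_eq_true, zero_pow] at h0
      have hterm : ∀ j', ‖⟪f j', y⟫‖ ^ 2 = 0 := by
        intro j'
        have hle := le_hasSum h0 j' (fun i _ => by positivity)
        have : (0:ℝ) ≤ ‖⟪f j', y⟫‖ ^ 2 := by positivity
        linarith
      have := hterm j
      have hfy : ⟪f j, y⟫ = 0 := by
        have : ‖⟪f j, y⟫‖ = 0 := by nlinarith [norm_nonneg ⟪f j, y⟫]
        simpa using this
      rw [← inner_conj_symm, hfy, map_zero]
    rwa [Submodule.orthogonal_orthogonal] at horth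
  -- Kd is a left inverse of K on N
  have hKdK : ∀ w ∈ N, Kd (K w) = w := by
    intro w hw
    have h1 : K (Kd (K w)) = K w := hKd _ ⟨w, rfl⟩
    have hd : Kd (K w) - w ∈ LinearMap.ker (K : H →ₗ[ℂ] H) ⊓ (LinearMap.ker (K : H →ₗ[ℂ] H))ᗮ := by
      constructor
      · show K (Kd (K w) - w) = 0
        rw [map_sub, h1, sub_self]
      · rw [← hKdrange]
        exact Submodule.sub_mem _ (LinearMap.mem_range_self _ _) hw
    rw [Submodule.inf_orthogonal_eq_bot, Submodule.mem_bot] at hd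
    exact sub_eq_zero.mp hd
  -- Kd ∘ K is the orthogonal projection onto N
  have hQ : ∀ x : H, Kd (K x) = (N.orthogonalProjectionOnto x : H) := by
    intro x
    have hsub : x - (N.orthogonalProjectionOnto x : H) ∈ Nᗮ :=
      N.sub_starProjection_mem_orthogonal x
    have hNorth : Nᗮ = LinearMap.ker (K : H →ₗ[ℂ] H) := by
      rw [hKdrange, Submodule.orthogonal_orthogonal]
    rw [hNorth, LinearMap.mem_ker] at hsub
    have hKx : K x = K (N.orthogonalProjectionOnto x : H) := by
      have : K (x - (N.orthogonalProjectionOnto x : H)) = 0 := hsub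
      rw [map_sub, sub_eq_zero] at this
      exact this
    rw [hKx]
    exact hKdK _ (Submodule.coe_mem _)
  have hsa : adjoint (Kd ∘L K) = Kd ∘L K := by
    have h2 : Kd ∘L K = N.subtypeL ∘L N.orthogonalProjectionOnto := by
      ext x
      simp only [ContinuousLinearMap.comp_apply, Submodule.subtypeL_apply]
      exact hQ x
    rw [h2]
    exact (isSelfAdjoint_starProjection N).adjoint_eq
  have hstar : ∀ v ∈ N, adjoint K (adjoint Kd v) = v := by
    intro v hv
    have h3 : adjoint (Kd ∘L K) v = v := by
      rw [hsa]
      simpa using hKdK v hv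
    rwa [adjoint_comp] at h3
  -- the Parseval frame for N
  set g : J → H := fun j => Kd (f j) with hg
  have hgN : ∀ j, g j ∈ N := fun j => LinearMap.mem_range_self _ _
  have hKg : ∀ j, K (g j) = f j := by
    intro j
    obtain ⟨y, hy⟩ := hfj j
    exact hKd _ ⟨y, hy⟩
  have hPg : ∀ v : H, v ∈ N → HasSum (fun j => ‖⟪g j, v⟫‖ ^ 2) (‖v‖ ^ 2) := by
    intro v hv
    have h1 := hParseval (adjoint Kd v)
    have h2 : ∀ j, ⟪f j, adjoint Kd v⟫ = ⟪g j, v⟫ := fun j => adjoint_inner_right _ _ _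
    simp only [h2, hstar v hv] at h1
    exact h1
  -- the dilation space
  have hAmem : ∀ v : N, Memℓp (fun j => ⟪g j, (v : H)⟫) 2 := by
    intro v
    apply memℓp_gen
    simpa [Real.rpow_natCast] using (hPg v v.2).summable
  set A : N →ₗᵢ[ℂ] lp (fun _ : J => ℂ) 2 :=
    { toFun := fun v => ⟨fun j => ⟪g j, (v : H)⟫, hAmem v⟩
      map_add' := by
        intro v w
        apply lp.ext
        funext j
        simp [inner_add_right]
        rfl
      map_smul' := by
        intro c v
        apply lp.ext
        funext j
        simp [inner_smul_right]
      norm_map' := by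
        intro v
        show ‖(⟨fun j => ⟪g j, (v : H)⟫, hAmem v⟩ : lp (fun _ : J => ℂ) 2)‖ = ‖(v : H)‖
        have h1 := lp.hasSum_norm (p := 2) (by norm_num)
          (⟨fun j => ⟪g j, (v : H)⟫, hAmem v⟩ : lp (fun _ : J => ℂ) 2)
        have h2 := hPg v v.2
        have h3 : ‖(⟨fun j => ⟪g j, (v : H)⟫, hAmem v⟩ : lp (fun _ : J => ℂ) 2)‖ ^ 2
            = ‖(v : H)‖ ^ 2 := by
          refine HasSum.unique ?_ h2
          simpa [Real.rpow_natCast] using h1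
        have hnn1 : (0:ℝ) ≤ ‖(⟨fun j => ⟪g j, (v : H)⟫, hAmem v⟩ : lp (fun _ : J => ℂ) 2)‖ :=
          norm_nonneg _
        have hnn2 : (0:ℝ) ≤ ‖(v : H)‖ := norm_nonneg _
        nlinarith [h3, hnn1, hnn2] } with hA
  set b : HilbertBasis J ℂ (lp (fun _ : J => ℂ) 2) :=
    HilbertBasis.ofRepr (LinearIsometryEquiv.refl ℂ _) with hb
  have hbj : ∀ j, b j = lp.single 2 j 1 := fun j => (b.repr_symm_single j).symm
  set S : Submodule ℂ (lp (fun _ : J => ℂ) 2) := LinearMap.range A.toLinearMap with hS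
  haveI : CompleteSpace S := by
    have : IsClosed (S : Set (lp (fun _ : J => ℂ) 2)) := by
      rw [hS, LinearMap.coe_range, LinearIsometry.coe_toLinearMap]
      exact A.isometry.isClosedEmbedding.isClosed_range
    exact this.completeSpace_coe
  set P : lp (fun _ : J => ℂ) 2 →L[ℂ] lp (fun _ : J => ℂ) 2 :=
    S.subtypeL ∘L S.orthogonalProjectionOnto with hP
  have hPsa : adjoint P = P := (isSelfAdjoint_starProjection S).adjoint_eq
  have hPfix : ∀ z ∈ S, P z = z := by
    intro z hz
    simp only [hP, ContinuousLinearMap.comp_apply, Submodule.subtypeL_apply]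
    exact Submodule.starProjection_eq_self_iff.mpr hz
  refine ⟨{ M := lp (fun _ : J => ℂ) 2
            emb := A
            basis := b
            proj := P
            proj_idem := ?_
            proj_sa := hPsa
            proj_range := ?_
            frame_eq := ?_ }⟩
  · refine ContinuousLinearMap.ext fun x => ?_
    simp only [ContinuousLinearMap.comp_apply, hP, Submodule.subtypeL_apply]
    rw [Submodule.orthogonalProjectionOnto_mem_subspace_eq_self]
  · have h1 : Set.range ⇑P = (S : Set (lp (fun _ : J => ℂ) 2)) := by
      ext z
      constructor
      · rintro ⟨y, rfl⟩
        exact Submodule.coe_mem _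
      · intro hz
        exact ⟨z, hPfix z hz⟩
    have h2 : Set.range ⇑A = (S : Set (lp (fun _ : J => ℂ) 2)) := by
      rw [hS, LinearMap.coe_range, LinearIsometry.coe_toLinearMap]
    rw [h1, h2]
  · intro j
    have hmem : P (b j) ∈ S := by
      simp only [hP, ContinuousLinearMap.comp_apply, Submodule.subtypeL_apply]
      exact Submodule.coe_mem _
    obtain ⟨w, hw⟩ := hmem
    rw [LinearIsometry.coe_toLinearMap] at hw
    refine ⟨w, hw, ?_⟩
    apply ext_inner_right ℂ
    intro x
    have hx : adjoint K x ∈ LinearMap.range (Kd : H →ₗ[ℂ] H) := by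
      have e : (LinearMap.range (Kd : H →ₗ[ℂ] H) : Submodule ℂ H) = (LinearMap.ker (K : H →ₗ[ℂ] H))ᗮ := hN ▸ hKdrange
      rw [e, Submodule.mem_orthogonal']
      intro u hu
      rw [adjoint_inner_left]
      have hu' : K u = 0 := hu
      rw [hu', inner_zero_right]
    set u : N := ⟨adjoint K x, hx⟩ with hudef
    have step1 : ⟪f j, x⟫ = ⟪(g j : H), (u : H)⟫ := by
      rw [← hKg j, ← adjoint_inner_right]
    have step2 : ⟪(g j : H), (u : H)⟫ = (A u : lp (fun _ : J => ℂ) 2) j := rfl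
    have step3 : (A u : lp (fun _ : J => ℂ) 2) j = ⟪b j, A u⟫ := by
      rw [hbj j, lp.inner_single_left]
      simp
    have step4 : ⟪b j, A u⟫ = ⟪b j, P (A u)⟫ := by
      rw [hPfix (A u) ⟨u, by rw [LinearIsometry.coe_toLinearMap]⟩]
    have step5 : ⟪b j, P (A u)⟫ = ⟪P (b j), A u⟫ := by
      conv_rhs => rw [← hPsa]
      rw [adjoint_inner_left]
    have step6 : ⟪P (b j), A u⟫ = ⟪A w, A u⟫ := by rw [hw]
    have step7 : ⟪A w, A u⟫ = ⟪w, u⟫ := A.inner_map_map w u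
    have step8 : (⟪w, u⟫ : ℂ) = ⟪(w : H), adjoint K x⟫ := rfl
    have step9 : ⟪(w : H), adjoint K x⟫ = ⟪K w, x⟫ := adjoint_inner_right _ _ _
    rw [step1, step2, step3, step4, step5, step6, step7, step8, step9]
end

section
/- Let {f_j}_{j∈J} be a Parseval K-frame for a Hilbert space H where K has closed range, and let K† be the pseudo-inverse of K. Then {K† f_j}_{j∈J} is a Parseval frame for R(K†): for all f ∈ R(K†), Σ_j |⟨f, K† f_j⟩|² = ‖f‖². -/
open scoped ComplexInnerProductSpace
open ContinuousLinearMap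

/-- If `{f_j}` is a Parseval `K`-frame for `H`, `K` has closed range and `K†` is its
pseudo-inverse, then `{K† f_j}` is a Parseval frame for `R(K†)`. -/
theorem stmt_7 {H : Type*} [NormedAddCommGroup H] [InnerProductSpace ℂ H] [CompleteSpace H]
    {J : Type} (K Kd : H →L[ℂ] H) (f : J → H)
    (hclosed : IsClosed (Set.range K))
    (hKd : ∀ x ∈ Set.range K, K (Kd x) = x)
    (hKdrange : LinearMap.range (Kd : H →ₗ[ℂ] H) = (LinearMap.ker (K : H →ₗ[ℂ] H))ᗮ)
    (hParseval : ∀ x : H,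
      HasSum (fun j => ‖⟪f j, x⟫‖ ^ 2) (‖ContinuousLinearMap.adjoint K x‖ ^ 2)) :
    ∀ x : H, x ∈ LinearMap.range (Kd : H →ₗ[ℂ] H) →
      HasSum (fun j => ‖⟪Kd (f j), x⟫‖ ^ 2) (‖x‖ ^ 2) := by
  intro x hx
  rw [hKdrange] at hx
  have key : ContinuousLinearMap.adjoint K (ContinuousLinearMap.adjoint Kd x) = x := by
    apply ext_inner_right ℂ
    intro v
    rw [ContinuousLinearMap.adjoint_inner_left, ContinuousLinearMap.adjoint_inner_left]
    have hk : Kd (K v) - v ∈ LinearMap.ker (K : H →ₗ[ℂ] H) := by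
      simp only [LinearMap.mem_ker, ContinuousLinearMap.coe_coe, map_sub]
      rw [hKd (K v) ⟨v, rfl⟩, sub_self]
    have := Submodule.inner_right_of_mem_orthogonal hk hx
    have h2 : ⟪x, Kd (K v) - v⟫ = 0 := by
      rw [← inner_conj_symm, this, map_zero]
    rw [inner_sub_right, sub_eq_zero] at h2
    exact h2
  have h := hParseval (ContinuousLinearMap.adjoint Kd x)
  rw [key] at h
  convert h using 2 with j
  rw [ContinuousLinearMap.adjoint_inner_right]
end

section
/- Let {f_j}_{j∈J} be a Parseval K-frame for H with synthesis operator T, and let {g_j}_{j∈J} be a K-dual of {f_j} with synthesis operator Θ such that {g_j} is a Parseval K*-frame for H. Then for every f ∈ H: ‖(T* − Θ*K*)f‖² = ‖KK*f‖² − ‖K*f‖². -/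
open scoped ComplexInnerProductSpace
open ContinuousLinearMap

private lemma aux_norm_sq_eq {E : Type*} [NormedAddCommGroup E] [InnerProductSpace ℂ E]
    {a : E} {F : Type*} [NormedAddCommGroup F] [InnerProductSpace ℂ F] {b : F}
    (h : ⟪a, a⟫ = ⟪b, b⟫) : ‖a‖ ^ 2 = ‖b‖ ^ 2 := by
  have := congrArg (RCLike.re (K := ℂ)) h
  rwa [inner_self_eq_norm_sq, inner_self_eq_norm_sq] at this

/-- If `{f_j}` is a Parseval `K`-frame with synthesis operator `T` and `{g_j}` is a `K`-dual
with synthesis operator `Θ` which is a Parseval `K*`-frame, then for all `f ∈ H`: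
`‖(T* − Θ*K*) f‖² = ‖KK* f‖² − ‖K* f‖²`. -/
theorem stmt_8 {H : Type*} [NormedAddCommGroup H] [InnerProductSpace ℂ H] [CompleteSpace H]
    {J : Type} [DecidableEq J] (K : H →L[ℂ] H)
    (T Θ : lp (fun _ : J => ℂ) 2 →L[ℂ] H) (f g : J → H)
    (hT : ∀ j, T (lp.single 2 j 1) = f j)
    (hΘ : ∀ j, Θ (lp.single 2 j 1) = g j)
    (hParseval : T ∘L ContinuousLinearMap.adjoint T = K ∘L ContinuousLinearMap.adjoint K)
    (hdual : T ∘L ContinuousLinearMap.adjoint Θ = K)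
    (hParseval' : Θ ∘L ContinuousLinearMap.adjoint Θ = ContinuousLinearMap.adjoint K ∘L K) :
    ∀ x : H,
      ‖(ContinuousLinearMap.adjoint T
          - ContinuousLinearMap.adjoint Θ ∘L ContinuousLinearMap.adjoint K) x‖ ^ 2
        = ‖K (ContinuousLinearMap.adjoint K x)‖ ^ 2
          - ‖ContinuousLinearMap.adjoint K x‖ ^ 2 := by
  intro x
  set u := ContinuousLinearMap.adjoint T x with hu
  set v := ContinuousLinearMap.adjoint Θ (ContinuousLinearMap.adjoint K x) with hv
  have hrw : (ContinuousLinearMap.adjoint T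
      - ContinuousLinearMap.adjoint Θ ∘L ContinuousLinearMap.adjoint K) x = u - v := rfl
  rw [hrw, @norm_sub_sq ℂ]
  have h1' : (‖u‖ : ℝ) ^ 2 = ‖ContinuousLinearMap.adjoint K x‖ ^ 2 := by
    apply aux_norm_sq_eq
    rw [hu, ContinuousLinearMap.adjoint_inner_left, ← ContinuousLinearMap.comp_apply,
      hParseval, ContinuousLinearMap.comp_apply, ← ContinuousLinearMap.adjoint_inner_left]
  have h2 : ⟪u, v⟫ = ⟪ContinuousLinearMap.adjoint K x, ContinuousLinearMap.adjoint K x⟫ := by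
    rw [hu, hv, ContinuousLinearMap.adjoint_inner_left]
    have hd : T (ContinuousLinearMap.adjoint Θ (ContinuousLinearMap.adjoint K x))
        = K (ContinuousLinearMap.adjoint K x) :=
      congrFun (congrArg DFunLike.coe hdual) _
    rw [hd, ← ContinuousLinearMap.adjoint_inner_left]
  have h2' : RCLike.re (K := ℂ) ⟪u, v⟫ = ‖ContinuousLinearMap.adjoint K x‖ ^ 2 := by
    rw [h2, inner_self_eq_norm_sq]
  have h3' : (‖v‖ : ℝ) ^ 2 = ‖K (ContinuousLinearMap.adjoint K x)‖ ^ 2 := by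
    apply aux_norm_sq_eq
    rw [hv, ContinuousLinearMap.adjoint_inner_left]
    have hp : Θ (ContinuousLinearMap.adjoint Θ (ContinuousLinearMap.adjoint K x))
        = ContinuousLinearMap.adjoint K (K (ContinuousLinearMap.adjoint K x)) :=
      congrFun (congrArg DFunLike.coe hParseval') _
    rw [hp, ContinuousLinearMap.adjoint_inner_right]
  rw [h1', h2', h3']
  ring
end

section
/- Let {f_j}_{j∈J} be a Parseval K-frame for H with synthesis operator T, and {g_j}_{j∈J} a K-dual with synthesis operator Θ such that {g_j} is a Parseval K*-frame, and suppose K has closed range. Then ‖(KK*)^{-1}‖^{-2}(1 − ‖K‖²) ≤ ‖T − KΘ‖² ≤ ‖K‖⁴, where (KK*)^{-1} denotes the inverse of KK* restricted to R(K). -/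
open scoped ComplexInnerProductSpace
open ContinuousLinearMap

set_option maxHeartbeats 4000000

/-- If `{f_j}` is a Parseval `K`-frame with synthesis operator `T`, `{g_j}` a `K`-dual with
synthesis operator `Θ` which is a Parseval `K*`-frame, and `K` has closed range, then
`‖(KK*)⁻¹‖⁻² (1 − ‖K‖²) ≤ ‖T − KΘ‖² ≤ ‖K‖⁴`, where `Sd` realizes the inverse of `KK*`
restricted to `R(K)` (extended by `0` on `R(K)ᗮ`). -/
theorem stmt_9 {H : Type*} [NormedAddCommGroup H] [InnerProductSpace ℂ H] [CompleteSpace H]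
    {J : Type} [DecidableEq J] (K : H →L[ℂ] H)
    (T Θ : lp (fun _ : J => ℂ) 2 →L[ℂ] H) (f g : J → H)
    (hT : ∀ j, T (lp.single 2 j 1) = f j)
    (hΘ : ∀ j, Θ (lp.single 2 j 1) = g j)
    (hParseval : T ∘L ContinuousLinearMap.adjoint T = K ∘L ContinuousLinearMap.adjoint K)
    (hdual : T ∘L ContinuousLinearMap.adjoint Θ = K)
    (hParseval' : Θ ∘L ContinuousLinearMap.adjoint Θ = ContinuousLinearMap.adjoint K ∘L K)
    (hclosed : IsClosed (Set.range K))
    (Sd : H →L[ℂ] H)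
    (hSd_range : ∀ x : H, Sd x ∈ Set.range K)
    (hSd_inv : ∀ x ∈ Set.range K, K (ContinuousLinearMap.adjoint K (Sd x)) = x)
    (hSd_inv' : ∀ x ∈ Set.range K, Sd (K (ContinuousLinearMap.adjoint K x)) = x)
    (hSd_ker : ∀ x ∈ (LinearMap.range (K : H →ₗ[ℂ] H) : Submodule ℂ H)ᗮ, Sd x = 0) :
    (‖Sd‖ ^ 2)⁻¹ * (1 - ‖K‖ ^ 2) ≤ ‖T - K ∘L Θ‖ ^ 2 ∧
      ‖T - K ∘L Θ‖ ^ 2 ≤ ‖K‖ ^ 4 := by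
  classical
  set D := T - K ∘L Θ with hDdef
  set Ka := ContinuousLinearMap.adjoint K with hKa
  -- pointwise versions of the operator hypotheses
  have hP : ∀ x : H, T (ContinuousLinearMap.adjoint T x) = K (Ka x) := fun x => by
    have h := ContinuousLinearMap.ext_iff.mp hParseval x
    rwa [ContinuousLinearMap.comp_apply, ContinuousLinearMap.comp_apply] at h
  have hd : ∀ x : H, T (ContinuousLinearMap.adjoint Θ x) = K x := fun x => by
    have h := ContinuousLinearMap.ext_iff.mp hdual x
    rwa [ContinuousLinearMap.comp_apply] at h
  have hP' : ∀ x : H, Θ (ContinuousLinearMap.adjoint Θ x) = Ka (K x) := fun x => by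
    have h := ContinuousLinearMap.ext_iff.mp hParseval' x
    rwa [ContinuousLinearMap.comp_apply, ContinuousLinearMap.comp_apply] at h
  have hadj : ContinuousLinearMap.adjoint D =
      ContinuousLinearMap.adjoint T - ContinuousLinearMap.adjoint Θ ∘L Ka := by
    rw [hDdef, map_sub, adjoint_comp, hKa]
  -- the key pointwise identity
  have key : ∀ y : H,
      ‖ContinuousLinearMap.adjoint D y‖ ^ 2 = ‖K (Ka y)‖ ^ 2 - ‖Ka y‖ ^ 2 := by
    intro y
    set a := ContinuousLinearMap.adjoint T y with ha
    set b := ContinuousLinearMap.adjoint Θ (Ka y) with hb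
    have hDy : ContinuousLinearMap.adjoint D y = a - b := by
      rw [hadj]; rfl
    have h1 : ⟪a, a⟫ = ⟪Ka y, Ka y⟫ := by
      calc ⟪a, a⟫ = ⟪y, T a⟫ := by
            rw [ha]; exact ContinuousLinearMap.adjoint_inner_left T _ y
        _ = ⟪y, K (Ka y)⟫ := by rw [ha, hP y]
        _ = ⟪Ka y, Ka y⟫ := by
            rw [hKa]; exact (ContinuousLinearMap.adjoint_inner_left K _ y).symm
    have h2 : ⟪a, b⟫ = ⟪Ka y, Ka y⟫ := by
      calc ⟪a, b⟫ = ⟪y, T b⟫ := by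
            rw [ha]; exact ContinuousLinearMap.adjoint_inner_left T b y
        _ = ⟪y, K (Ka y)⟫ := by rw [hb, hd (Ka y)]
        _ = ⟪Ka y, Ka y⟫ := by
            rw [hKa]; exact (ContinuousLinearMap.adjoint_inner_left K _ y).symm
    have h3 : ⟪b, b⟫ = ⟪K (Ka y), K (Ka y)⟫ := by
      calc ⟪b, b⟫ = ⟪Ka y, Θ b⟫ := by
            rw [hb]; exact ContinuousLinearMap.adjoint_inner_left Θ b (Ka y)
        _ = ⟪Ka y, Ka (K (Ka y))⟫ := by rw [hb, hP' (Ka y)]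
        _ = ⟪K (Ka y), K (Ka y)⟫ := by
            rw [hKa, ContinuousLinearMap.adjoint_inner_right]
    have hna : ‖a‖ ^ 2 = ‖Ka y‖ ^ 2 := by
      rw [← inner_self_eq_norm_sq (𝕜 := ℂ) a, ← inner_self_eq_norm_sq (𝕜 := ℂ) (Ka y), h1]
    have hnb : ‖b‖ ^ 2 = ‖K (Ka y)‖ ^ 2 := by
      rw [← inner_self_eq_norm_sq (𝕜 := ℂ) b,
        ← inner_self_eq_norm_sq (𝕜 := ℂ) (K (Ka y)), h3]
    have hre : RCLike.re ⟪a, b⟫ = ‖Ka y‖ ^ 2 := by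
      rw [h2, inner_self_eq_norm_sq]
    rw [hDy, norm_sub_sq (𝕜 := ℂ), hna, hnb, hre]
    ring
  have hDnorm : ‖ContinuousLinearMap.adjoint D‖ = ‖D‖ := LinearIsometryEquiv.norm_map _ D
  have hKanorm : ‖Ka‖ = ‖K‖ := LinearIsometryEquiv.norm_map _ K
  -- upper bound
  have hDle : ‖D‖ ≤ ‖K‖ ^ 2 := by
    rw [← hDnorm]
    refine ContinuousLinearMap.opNorm_le_bound _ (by positivity) fun y => ?_
    have h1 : ‖ContinuousLinearMap.adjoint D y‖ ^ 2 ≤ (‖K‖ ^ 2 * ‖y‖) ^ 2 := by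
      rw [key y]
      have h2 : ‖K (Ka y)‖ ≤ ‖K‖ ^ 2 * ‖y‖ := by
        calc ‖K (Ka y)‖ ≤ ‖K‖ * ‖Ka y‖ := K.le_opNorm _
          _ ≤ ‖K‖ * (‖Ka‖ * ‖y‖) := by
              have := Ka.le_opNorm y
              nlinarith [norm_nonneg K, norm_nonneg (Ka y)]
          _ = ‖K‖ ^ 2 * ‖y‖ := by rw [hKanorm]; ring
      nlinarith [norm_nonneg (Ka y), norm_nonneg (K (Ka y)), norm_nonneg (ContinuousLinearMap.adjoint D y), mul_nonneg (mul_nonneg (norm_nonneg K) (norm_nonneg K)) (norm_nonneg y)]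
    have hnn : (0:ℝ) ≤ ‖K‖ ^ 2 * ‖y‖ := by positivity
    nlinarith [norm_nonneg (ContinuousLinearMap.adjoint D y)]
  have upper : ‖D‖ ^ 2 ≤ ‖K‖ ^ 4 := by nlinarith [norm_nonneg D]
  refine ⟨?_, upper⟩
  -- claim A : ‖Ka y‖ ≤ ‖K (Ka y)‖ for all y
  have claimA : ∀ y : H, ‖Ka y‖ ≤ ‖K (Ka y)‖ := by
    intro y
    have h0 : (0:ℝ) ≤ ‖ContinuousLinearMap.adjoint D y‖ ^ 2 := by positivity
    rw [key y] at h0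
    nlinarith [norm_nonneg (Ka y), norm_nonneg (K (Ka y))]
  -- claim B : for u in range K, ‖u‖ ≤ ‖K (Ka u)‖
  have claimB : ∀ u ∈ Set.range K, ‖u‖ ≤ ‖K (Ka u)‖ := by
    intro u hu
    rcases eq_or_ne u 0 with rfl | hu0
    · simpa using norm_nonneg _
    have h1 : ‖u‖ ^ 2 = RCLike.re ⟪K (Ka (Sd u)), u⟫ := by
      rw [hSd_inv u hu, inner_self_eq_norm_sq]
    have h2 : RCLike.re ⟪K (Ka (Sd u)), u⟫ = RCLike.re ⟪Ka (Sd u), Ka u⟫ := by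
      rw [hKa, ContinuousLinearMap.adjoint_inner_right]
    have h3 : RCLike.re ⟪Ka (Sd u), Ka u⟫ ≤ ‖Ka (Sd u)‖ * ‖Ka u‖ := re_inner_le_norm _ _
    have h4 : ‖Ka (Sd u)‖ ≤ ‖u‖ := by
      have := claimA (Sd u)
      rwa [hSd_inv u hu] at this
    have h5 : ‖Ka u‖ ≤ ‖K (Ka u)‖ := claimA u
    have h6 : ‖u‖ ^ 2 ≤ ‖u‖ * ‖K (Ka u)‖ := by
      nlinarith [norm_nonneg (Ka u), norm_nonneg (Ka (Sd u)), norm_nonneg u,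
        norm_nonneg (K (Ka u))]
    have hupos : (0:ℝ) < ‖u‖ := norm_pos_iff.mpr hu0
    nlinarith
  -- Sd is a contraction on range K
  have hSdcontr : ∀ p ∈ Set.range K, ‖Sd p‖ ≤ ‖p‖ := by
    intro p hp
    have h1 : ‖Sd p‖ ≤ ‖K (Ka (Sd p))‖ := claimB (Sd p) (hSd_range p)
    rwa [hSd_inv p hp] at h1
  by_cases hSd0 : Sd = 0
  · rw [hSd0]
    simp only [norm_zero]
    norm_num
  -- Sd ≠ 0
  have hSdpos : (0:ℝ) < ‖Sd‖ := norm_pos_iff.mpr hSd0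
  by_cases hK1 : (1:ℝ) ≤ ‖K‖ ^ 2
  · have h1 : (1 - ‖K‖ ^ 2) ≤ 0 := by linarith
    have h2 : (‖Sd‖ ^ 2)⁻¹ * (1 - ‖K‖ ^ 2) ≤ 0 :=
      mul_nonpos_of_nonneg_of_nonpos (by positivity) h1
    have : (0:ℝ) ≤ ‖D‖ ^ 2 := by positivity
    linarith
  push_neg at hK1
  -- ‖Sd‖ ≤ 1, using the orthogonal decomposition
  have hM : CompleteSpace (LinearMap.range (K : H →ₗ[ℂ] H) : Submodule ℂ H) := by
    have : IsClosed ((LinearMap.range (K : H →ₗ[ℂ] H) : Submodule ℂ H) : Set H) := by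
      have : ((LinearMap.range (K : H →ₗ[ℂ] H) : Submodule ℂ H) : Set H) = Set.range K := by
        ext x; simp [LinearMap.mem_range]
      rw [this]; exact hclosed
    exact this.completeSpace_coe
  have hSd1 : ‖Sd‖ ≤ 1 := by
    refine ContinuousLinearMap.opNorm_le_bound _ one_pos.le fun x => ?_
    obtain ⟨p, hpM, hq⟩ :=
      Submodule.HasOrthogonalProjection.exists_orthogonal
        (K := (LinearMap.range (K : H →ₗ[ℂ] H) : Submodule ℂ H)) x
    have hpr : p ∈ Set.range K := by
      rcases LinearMap.mem_range.mp hpM with ⟨w, hw⟩; exact ⟨w, hw⟩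
    have hx : x = p + (x - p) := by abel
    have hSdx : Sd x = Sd p := by
      conv_lhs => rw [hx]
      rw [map_add, hSd_ker _ hq, add_zero]
    have hinner : ⟪p, x - p⟫ = 0 := hq p hpM
    have hnorm : ‖p‖ ≤ ‖x‖ := by
      have h1 : ‖x‖ * ‖x‖ = ‖p‖ * ‖p‖ + ‖x - p‖ * ‖x - p‖ := by
        conv_lhs => rw [hx]
        exact norm_add_sq_eq_norm_sq_add_norm_sq_of_inner_eq_zero p (x - p) hinner
      nlinarith [norm_nonneg p, norm_nonneg x, norm_nonneg (x - p)]
    calc ‖Sd x‖ = ‖Sd p‖ := by rw [hSdx]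
      _ ≤ ‖p‖ := hSdcontr p hpr
      _ ≤ ‖x‖ := hnorm
      _ = 1 * ‖x‖ := (one_mul _).symm
  -- pick a nonzero element of range K
  obtain ⟨x0, hx0⟩ : ∃ x : H, Sd x ≠ 0 := by
    by_contra h
    push_neg at h
    exact hSd0 (ContinuousLinearMap.ext fun x => by simpa using h x)
  set u := Sd x0 with hu
  have huR : u ∈ Set.range K := hSd_range x0
  have hu0 : u ≠ 0 := hx0
  have hupos : (0:ℝ) < ‖u‖ := norm_pos_iff.mpr hu0
  -- lower bound for ‖K (Ka u)‖
  have hfb : ‖u‖ ≤ ‖Sd‖ * ‖K (Ka u)‖ := by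
    have h1 : u = Sd (K (Ka u)) := (hSd_inv' u huR).symm
    calc ‖u‖ = ‖Sd (K (Ka u))‖ := by rw [← h1]
      _ ≤ ‖Sd‖ * ‖K (Ka u)‖ := Sd.le_opNorm _
  have hKKu : (‖Sd‖ ^ 2)⁻¹ * ‖u‖ ^ 2 ≤ ‖K (Ka u)‖ ^ 2 := by
    rw [inv_mul_le_iff₀ (by positivity)]
    nlinarith [norm_nonneg (K (Ka u)), hSdpos]
  have hKau : ‖Ka u‖ ^ 2 ≤ ‖K‖ ^ 2 * ‖u‖ ^ 2 := by
    have h1 : ‖Ka u‖ ≤ ‖K‖ * ‖u‖ := by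
      have := Ka.le_opNorm u
      rwa [hKanorm] at this
    nlinarith [norm_nonneg (Ka u), mul_nonneg (norm_nonneg K) (norm_nonneg u)]
  have hc1 : (1:ℝ) ≤ (‖Sd‖ ^ 2)⁻¹ := by
    rw [le_inv_comm₀ one_pos (by positivity)]
    nlinarith
  -- combine
  have hDu : ‖ContinuousLinearMap.adjoint D u‖ ^ 2 ≤ ‖D‖ ^ 2 * ‖u‖ ^ 2 := by
    have h1 : ‖ContinuousLinearMap.adjoint D u‖ ≤ ‖D‖ * ‖u‖ := by
      have := (ContinuousLinearMap.adjoint D).le_opNorm u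
      rwa [hDnorm] at this
    nlinarith [norm_nonneg (ContinuousLinearMap.adjoint D u),
      mul_nonneg (norm_nonneg D) (norm_nonneg u)]
  have hmain : (‖Sd‖ ^ 2)⁻¹ * (1 - ‖K‖ ^ 2) * ‖u‖ ^ 2 ≤ ‖D‖ ^ 2 * ‖u‖ ^ 2 := by
    have hkey := key u
    have hKK2 : ‖K‖ ^ 2 ≤ (‖Sd‖ ^ 2)⁻¹ * ‖K‖ ^ 2 := by
      nlinarith [sq_nonneg (‖K‖)]
    nlinarith [hKau, hKKu, hDu]
  have := (mul_le_mul_iff_of_pos_right (by positivity : (0:ℝ) < ‖u‖ ^ 2)).mp hmain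
  exact this
end

section
/- Let K ∈ B(H) and let {f_j}_{j∈J} be a sequence in H. Then {f_j} is a K-frame for H if and only if there exists a bounded linear operator T: ℓ²(J) → H with f_j = Tδ_j for all j (where {δ_j} is the standard orthonormal basis of ℓ²(J)) and R(K) ⊆ R(T). -/
open scoped ComplexInnerProductSpace
open ContinuousLinearMap

section Aux

variable {E F : Type*} [NormedAddCommGroup E] [InnerProductSpace ℂ E] [CompleteSpace E]
  [NormedAddCommGroup F] [InnerProductSpace ℂ F] [CompleteSpace F]

/-- Douglas-type criterion: if `|⟪y, z⟫| ≤ c ‖T† z‖` for all `z`, then `y ∈ range T`. -/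
lemma mem_range_of_inner_le (T : E →L[ℂ] F) (y : F) (c : ℝ)
    (h : ∀ z : F, ‖(⟪y, z⟫ : ℂ)‖ ≤ c * ‖ContinuousLinearMap.adjoint T z‖) :
    y ∈ Set.range T := by
  set S := ContinuousLinearMap.adjoint T with hS
  have key : ∀ z z' : F, S z = S z' → (⟪y, z⟫ : ℂ) = ⟪y, z'⟫ := by
    intro z z' hzz
    have h0 : ‖(⟪y, z - z'⟫ : ℂ)‖ ≤ c * ‖S (z - z')‖ := h _
    rw [map_sub, hzz, sub_self, norm_zero, mul_zero] at h0
    have h1 : (⟪y, z - z'⟫ : ℂ) = 0 := norm_le_zero_iff.mp h0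
    rw [inner_sub_right, sub_eq_zero] at h1
    exact h1
  set p : Submodule ℂ E := LinearMap.range (S : F →ₗ[ℂ] E) with hp
  have sel : ∀ w : p, ∃ z : F, S z = (w : E) := fun w => LinearMap.mem_range.mp w.2
  set g0fun : p → ℂ := fun w => ⟪y, (sel w).choose⟫ with hg0fun
  have g0spec : ∀ (w : p) (z : F), S z = (w : E) → g0fun w = ⟪y, z⟫ := by
    intro w z hz
    exact key _ _ ((sel w).choose_spec.trans hz.symm)
  set g0 : p →ₗ[ℂ] ℂ :=
    { toFun := g0fun
      map_add' := by
        intro w w'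
        obtain ⟨z, hz⟩ := sel w
        obtain ⟨z', hz'⟩ := sel w'
        rw [g0spec w z hz, g0spec w' z' hz',
          g0spec (w + w') (z + z') (by rw [map_add, hz, hz']; rfl), inner_add_right]
      map_smul' := by
        intro a w
        obtain ⟨z, hz⟩ := sel w
        show g0fun (a • w) = a • g0fun w
        rw [g0spec w z hz, g0spec (a • w) (a • z) (by rw [map_smul, hz]; rfl),
          inner_smul_right]
        simp } with hg0
  have g0bound : ∀ w : p, ‖g0 w‖ ≤ c * ‖w‖ := by
    intro w
    obtain ⟨z, hz⟩ := sel w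
    have : g0 w = ⟪y, z⟫ := g0spec w z hz
    rw [this]
    calc ‖(⟪y, z⟫ : ℂ)‖ ≤ c * ‖S z‖ := h z
      _ = c * ‖w‖ := by rw [hz]; rfl
  set g1 : p →L[ℂ] ℂ := LinearMap.mkContinuous g0 c g0bound with hg1
  obtain ⟨g, hg, -⟩ := exists_extension_norm_eq p g1
  refine ⟨(InnerProductSpace.toDual ℂ E).symm g, ?_⟩
  apply ext_inner_right ℂ
  intro z
  set u := (InnerProductSpace.toDual ℂ E).symm g with hu
  have h1 := congrArg (starRingEnd ℂ) (adjoint_inner_left T u z)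
  rw [inner_conj_symm, inner_conj_symm] at h1
  rw [← hS] at h1
  rw [← h1]
  have h2 : ⟪u, S z⟫ = g (S z) := InnerProductSpace.toDual_symm_apply
  rw [h2]
  have hmem : S z ∈ p := ⟨z, rfl⟩
  have h3 : g (S z) = g1 ⟨S z, hmem⟩ := ((hg ⟨S z, hmem⟩).symm : g1 _ = g ((⟨S z, hmem⟩ : p) : E)).symm
  rw [h3]
  exact g0spec ⟨S z, hmem⟩ z rfl


/-- If `range K ⊆ range T`, then `‖K† x‖ ≤ c ‖T† x‖` for some `c ≥ 0`. -/
lemma exists_bound_of_range_subset (T : E →L[ℂ] F) (K : F →L[ℂ] F)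
    (h : Set.range K ⊆ Set.range T) :
    ∃ c : ℝ, 0 ≤ c ∧ ∀ x : F, ‖ContinuousLinearMap.adjoint K x‖
      ≤ c * ‖ContinuousLinearMap.adjoint T x‖ := by
  set N : Submodule ℂ E := LinearMap.ker (T : E →ₗ[ℂ] F) with hN
  haveI : CompleteSpace N := (ContinuousLinearMap.isClosed_ker T).completeSpace_coe
  have uniq : ∀ v w : E, v ∈ Nᗮ → w ∈ Nᗮ → T v = T w → v = w := by
    intro v w hv hw hvw
    have h1 : v - w ∈ N := by
      rw [hN, LinearMap.mem_ker, map_sub, sub_eq_zero]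
      exact hvw
    have h2 : v - w ∈ Nᗮ := Submodule.sub_mem _ hv hw
    have h3 : (⟪v - w, v - w⟫ : ℂ) = 0 := (Submodule.mem_orthogonal N (v - w)).mp h2 (v - w) h1
    rw [inner_self_eq_zero, sub_eq_zero] at h3
    exact h3
  have sel : ∀ x : F, ∃ u : E, T u = K x := fun x => h ⟨x, rfl⟩
  set Cfun : F → E := fun x => (Submodule.orthogonalProjectionOnto Nᗮ (sel x).choose : E) with hCfun
  have Cmem : ∀ x, Cfun x ∈ Nᗮ := fun x => SetLike.coe_mem _
  have Cspec : ∀ x, T (Cfun x) = K x := by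
    intro x
    have hu := (sel x).choose_spec
    have hmem : (sel x).choose - Cfun x ∈ N := by
      have h4 : (sel x).choose - Cfun x ∈ Nᗮᗮ :=
        Submodule.sub_starProjection_mem_orthogonal (K := Nᗮ) (sel x).choose
      rwa [Submodule.orthogonal_orthogonal] at h4
    rw [hN, LinearMap.mem_ker, map_sub, sub_eq_zero, ContinuousLinearMap.coe_coe] at hmem
    rw [← hmem, hu]
  set Clin : F →ₗ[ℂ] E :=
    { toFun := Cfun
      map_add' := by
        intro x y
        refine uniq _ _ (Cmem (x + y)) (Submodule.add_mem _ (Cmem x) (Cmem y)) ?_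
        rw [Cspec, map_add, map_add, Cspec, Cspec]
      map_smul' := by
        intro a x
        refine uniq _ _ (Cmem (a • x)) (Submodule.smul_mem _ a (Cmem x)) ?_
        rw [Cspec, map_smul, map_smul, Cspec]
        rfl } with hClin
  have hgraph : ∀ (u : ℕ → F) (x y), Filter.Tendsto u Filter.atTop (nhds x) →
      Filter.Tendsto (Clin ∘ u) Filter.atTop (nhds y) → y = Clin x := by
    intro u x y hux hcy
    have hTy : Filter.Tendsto (fun n => T (Clin (u n))) Filter.atTop (nhds (T y)) :=
      (T.continuous.tendsto y).comp hcy
    have hKx : Filter.Tendsto (fun n => T (Clin (u n))) Filter.atTop (nhds (K x)) := by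
      have : (fun n => T (Clin (u n))) = fun n => K (u n) := by
        funext n; exact Cspec (u n)
      rw [this]
      exact (K.continuous.tendsto x).comp hux
    have hTyKx : T y = K x := tendsto_nhds_unique hTy hKx
    have hymem : y ∈ Nᗮ := by
      refine N.isClosed_orthogonal.mem_of_tendsto hcy ?_
      exact Filter.Eventually.of_forall fun n => Cmem (u n)
    exact uniq _ _ hymem (Cmem x) (by rw [hTyKx]; exact (Cspec x).symm)
  set C : F →L[ℂ] E := ContinuousLinearMap.ofSeqClosedGraph hgraph with hC
  have hKT : K = T ∘L C := by
    ext x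
    exact (Cspec x).symm
  refine ⟨‖C‖, norm_nonneg C, fun x => ?_⟩
  have h5 : ContinuousLinearMap.adjoint K = ContinuousLinearMap.adjoint C ∘L
      ContinuousLinearMap.adjoint T := by rw [hKT, adjoint_comp]
  rw [h5]
  calc ‖(ContinuousLinearMap.adjoint C) ((ContinuousLinearMap.adjoint T) x)‖
      ≤ ‖ContinuousLinearMap.adjoint C‖ * ‖(ContinuousLinearMap.adjoint T) x‖ :=
        (ContinuousLinearMap.adjoint C).le_opNorm _
    _ = ‖C‖ * ‖(ContinuousLinearMap.adjoint T) x‖ := by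
        rw [ContinuousLinearMap.adjoint.norm_map]

end Aux

lemma lp2_hasSum_norm_sq {J : Type} (v : lp (fun _ : J => ℂ) 2) :
    HasSum (fun j => ‖v j‖ ^ 2) (‖v‖ ^ 2) := by
  have h := lp.hasSum_norm (E := fun _ : J => ℂ) (p := 2) (by norm_num) v
  have h2 : ∀ r : ℝ, r ^ ((2 : ENNReal).toReal) = r ^ 2 := by
    intro r
    rw [ENNReal.toReal_ofNat]
    exact_mod_cast Real.rpow_natCast r 2
  simpa [h2] using h

/-- `{f_j}` is a `K`-frame for `H` if and only if there is a bounded operator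
`T : ℓ²(J) → H` with `f_j = T δ_j` for all `j` and `R(K) ⊆ R(T)`. -/
theorem stmt_11 {H : Type*} [NormedAddCommGroup H] [InnerProductSpace ℂ H] [CompleteSpace H]
    {J : Type} [DecidableEq J] (K : H →L[ℂ] H) (f : J → H) :
    (∃ A B : ℝ, 0 < A ∧ A ≤ B ∧ ∀ x : H,
        Summable (fun j => ‖⟪f j, x⟫‖ ^ 2) ∧
        A * ‖ContinuousLinearMap.adjoint K x‖ ^ 2 ≤ ∑' j, ‖⟪f j, x⟫‖ ^ 2 ∧
        ∑' j, ‖⟪f j, x⟫‖ ^ 2 ≤ B * ‖x‖ ^ 2)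
      ↔ ∃ T : lp (fun _ : J => ℂ) 2 →L[ℂ] H,
          (∀ j, f j = T (lp.single 2 j 1)) ∧ Set.range K ⊆ Set.range T := by
  constructor
  · rintro ⟨A, B, hA, hAB, hx⟩
    have hB : (0 : ℝ) < B := lt_of_lt_of_le hA hAB
    have h2 : ∀ r : ℝ, r ^ ((2 : ENNReal).toReal) = r ^ 2 := by
      intro r
      rw [ENNReal.toReal_ofNat]
      exact_mod_cast Real.rpow_natCast r 2
    have hmem : ∀ x : H, Memℓp (fun j => (⟪f j, x⟫ : ℂ)) 2 := by
      intro x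
      apply memℓp_gen
      simpa [h2] using (hx x).1
    set θ₀ : H →ₗ[ℂ] lp (fun _ : J => ℂ) 2 :=
      { toFun := fun x => ⟨fun j => ⟪f j, x⟫, hmem x⟩
        map_add' := by
          intro x y
          apply lp.ext
          funext j
          simp only [lp.coeFn_add, Pi.add_apply]
          exact inner_add_right _ _ _
        map_smul' := by
          intro a x
          apply lp.ext
          funext j
          simp only [lp.coeFn_smul, Pi.smul_apply]
          exact inner_smul_right _ _ _ } with hθ₀
    have hθ₀app : ∀ (x : H) (j : J), (θ₀ x) j = ⟪f j, x⟫ := fun x j => rfl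
    have hnormsq : ∀ x : H, ‖θ₀ x‖ ^ 2 = ∑' j, ‖⟪f j, x⟫‖ ^ 2 := by
      intro x
      have h3 := lp2_hasSum_norm_sq (θ₀ x)
      rw [← h3.tsum_eq]
      rfl
    have hbound : ∀ x : H, ‖θ₀ x‖ ≤ Real.sqrt B * ‖x‖ := by
      intro x
      have h4 : ‖θ₀ x‖ ^ 2 ≤ B * ‖x‖ ^ 2 := by rw [hnormsq x]; exact (hx x).2.2
      have h5 : ‖θ₀ x‖ = Real.sqrt (‖θ₀ x‖ ^ 2) := (Real.sqrt_sq (norm_nonneg _)).symm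
      rw [h5]
      calc Real.sqrt (‖θ₀ x‖ ^ 2) ≤ Real.sqrt (B * ‖x‖ ^ 2) := Real.sqrt_le_sqrt h4
        _ = Real.sqrt B * ‖x‖ := by
            rw [Real.sqrt_mul hB.le, Real.sqrt_sq (norm_nonneg x)]
    set θ : H →L[ℂ] lp (fun _ : J => ℂ) 2 := LinearMap.mkContinuous θ₀ (Real.sqrt B) hbound
      with hθ
    have hθapp : ∀ (x : H) (j : J), (θ x) j = ⟪f j, x⟫ := fun x j => rfl
    refine ⟨ContinuousLinearMap.adjoint θ, ?_, ?_⟩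
    · intro j
      apply ext_inner_right ℂ
      intro z
      rw [adjoint_inner_left θ, lp.inner_single_left]
      simp [hθapp]
    · rintro - ⟨x, rfl⟩
      apply mem_range_of_inner_le _ _ (‖x‖ * Real.sqrt A⁻¹)
      intro z
      rw [adjoint_adjoint]
      have h6 : A * ‖ContinuousLinearMap.adjoint K z‖ ^ 2 ≤ ‖θ z‖ ^ 2 := by
        rw [show ‖θ z‖ = ‖θ₀ z‖ from rfl, hnormsq z]
        exact (hx z).2.1
      have h7 : ‖ContinuousLinearMap.adjoint K z‖ ≤ Real.sqrt A⁻¹ * ‖θ z‖ := by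
        have h8 : ‖ContinuousLinearMap.adjoint K z‖ ^ 2 ≤ A⁻¹ * ‖θ z‖ ^ 2 := by
          exact (le_inv_mul_iff₀ hA).mpr h6
        calc ‖ContinuousLinearMap.adjoint K z‖
            = Real.sqrt (‖ContinuousLinearMap.adjoint K z‖ ^ 2) :=
              (Real.sqrt_sq (norm_nonneg _)).symm
          _ ≤ Real.sqrt (A⁻¹ * ‖θ z‖ ^ 2) := Real.sqrt_le_sqrt h8
          _ = Real.sqrt A⁻¹ * ‖θ z‖ := by
              rw [Real.sqrt_mul (by positivity), Real.sqrt_sq (norm_nonneg _)]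
      have h9 : ‖(⟪K x, z⟫ : ℂ)‖ ≤ ‖x‖ * ‖ContinuousLinearMap.adjoint K z‖ := by
        rw [← adjoint_inner_right K]
        exact norm_inner_le_norm _ _
      calc ‖(⟪K x, z⟫ : ℂ)‖ ≤ ‖x‖ * ‖ContinuousLinearMap.adjoint K z‖ := h9
        _ ≤ ‖x‖ * (Real.sqrt A⁻¹ * ‖θ z‖) := by
            exact mul_le_mul_of_nonneg_left h7 (norm_nonneg x)
        _ = ‖x‖ * Real.sqrt A⁻¹ * ‖θ z‖ := by ring
  · rintro ⟨T, hT1, hT2⟩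
    obtain ⟨c, hc0, hc⟩ := exists_bound_of_range_subset T K hT2
    refine ⟨(c ^ 2 + 1)⁻¹, ‖T‖ ^ 2 + (c ^ 2 + 1)⁻¹, by positivity,
      le_add_of_nonneg_left (by positivity), fun x => ?_⟩
    set v := ContinuousLinearMap.adjoint T x with hv
    have hco : ∀ j, (⟪f j, x⟫ : ℂ) = v j := by
      intro j
      rw [hT1 j, ← adjoint_inner_right T, lp.inner_single_left]
      simp
      rfl
    have hsum : HasSum (fun j => ‖(⟪f j, x⟫ : ℂ)‖ ^ 2) (‖v‖ ^ 2) := by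
      have := lp2_hasSum_norm_sq v
      simpa [hco] using this
    refine ⟨hsum.summable, ?_, ?_⟩
    · rw [hsum.tsum_eq]
      have h10 := hc x
      rw [← hv] at h10
      rw [inv_mul_le_iff₀ (by positivity)]
      nlinarith [norm_nonneg (ContinuousLinearMap.adjoint K x), norm_nonneg v, sq_nonneg c,
        sq_nonneg ‖v‖]
    · rw [hsum.tsum_eq]
      have h11 : ‖v‖ ≤ ‖T‖ * ‖x‖ := by
        calc ‖v‖ ≤ ‖ContinuousLinearMap.adjoint T‖ * ‖x‖ :=
            (ContinuousLinearMap.adjoint T).le_opNorm x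
          _ = ‖T‖ * ‖x‖ := by rw [ContinuousLinearMap.adjoint.norm_map]
      nlinarith [norm_nonneg v, norm_nonneg x, norm_nonneg T, mul_nonneg (norm_nonneg T)
        (norm_nonneg x), sq_nonneg ‖x‖, inv_nonneg.mpr (by positivity : (0:ℝ) ≤ c ^ 2 + 1)]
end

section
/- Let {f_j}_{j∈J} be a Parseval K-frame for H where K has closed range, and let T be its synthesis operator. Then R(T) = R(K); in particular every frame vector f_j lies in the range of K. -/
open scoped ComplexInnerProductSpace
open ContinuousLinearMap

private lemma aux_orth_range_eq_ker_adjoint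
    {H : Type*} [NormedAddCommGroup H] [InnerProductSpace ℂ H] [CompleteSpace H]
    {H' : Type*} [NormedAddCommGroup H'] [InnerProductSpace ℂ H'] [CompleteSpace H']
    (A : H →L[ℂ] H') :
    (LinearMap.range (A : H →ₗ[ℂ] H'))ᗮ = LinearMap.ker (ContinuousLinearMap.adjoint A : H' →ₗ[ℂ] H) := by
  ext x
  simp only [Submodule.mem_orthogonal, LinearMap.mem_range, LinearMap.mem_ker,
    ContinuousLinearMap.coe_coe]
  constructor
  · intro h
    have h2 : ∀ u, ⟪u, (ContinuousLinearMap.adjoint A) x⟫ = 0 := by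
      intro u
      rw [ContinuousLinearMap.adjoint_inner_right]
      exact h _ ⟨u, rfl⟩
    have := h2 ((ContinuousLinearMap.adjoint A) x)
    simpa [inner_self_eq_zero] using this
  · intro h y ⟨u, hu⟩
    subst hu
    rw [← ContinuousLinearMap.adjoint_inner_right, h, inner_zero_right]

private lemma aux_adjoint_norm_hasSum
    {H : Type*} [NormedAddCommGroup H] [InnerProductSpace ℂ H] [CompleteSpace H]
    {J : Type} [DecidableEq J] (T : lp (fun _ : J => ℂ) 2 →L[ℂ] H) (x : H) :
    HasSum (fun j => ‖(ContinuousLinearMap.adjoint T x) j‖ ^ 2)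
      (‖ContinuousLinearMap.adjoint T x‖ ^ 2) := by
  have h := lp.hasSum_inner (𝕜 := ℂ) (ContinuousLinearMap.adjoint T x)
    (ContinuousLinearMap.adjoint T x)
  have h2 := h.mapL (RCLike.reCLM (K := ℂ))
  simpa only [RCLike.reCLM_apply, Function.comp_def, inner_self_eq_norm_sq] using h2

set_option maxHeartbeats 1000000 in
/-- If `{f_j}` is a Parseval `K`-frame for `H`, `K` has closed range, and `T` is the
synthesis operator, then `R(T) = R(K)`; in particular every `f_j` lies in `R(K)`. -/
theorem stmt_19 {H : Type*} [NormedAddCommGroup H] [InnerProductSpace ℂ H] [CompleteSpace H]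
    {J : Type} [DecidableEq J] (K : H →L[ℂ] H) (f : J → H)
    (hclosed : IsClosed (Set.range K))
    (T : lp (fun _ : J => ℂ) 2 →L[ℂ] H)
    (hT : ∀ j, T (lp.single 2 j 1) = f j)
    (hParseval : ∀ x : H,
      HasSum (fun j => ‖⟪f j, x⟫‖ ^ 2) (‖ContinuousLinearMap.adjoint K x‖ ^ 2)) :
    Set.range T = Set.range K ∧ ∀ j, f j ∈ Set.range K := by
  classical
  -- coordinates of the adjoint of T
  have hcoord : ∀ (x : H) (j : J),
      (ContinuousLinearMap.adjoint T x) j = ⟪f j, x⟫ := by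
    intro x j
    have h := lp.inner_single_left (𝕜 := ℂ) j (1 : ℂ) (ContinuousLinearMap.adjoint T x)
    rw [ContinuousLinearMap.adjoint_inner_right, hT j] at h
    simpa using h.symm
  -- the two adjoints have equal norms pointwise
  have hnorm : ∀ x : H,
      ‖ContinuousLinearMap.adjoint T x‖ = ‖ContinuousLinearMap.adjoint K x‖ := by
    intro x
    have h1 := aux_adjoint_norm_hasSum T x
    have h2 := hParseval x
    have h1' : HasSum (fun j => ‖⟪f j, x⟫‖ ^ 2) (‖ContinuousLinearMap.adjoint T x‖ ^ 2) := by
      refine h1.congr_fun fun j => ?_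
      rw [hcoord x j]
    have hsq := h1'.unique h2
    have := congrArg Real.sqrt hsq
    simpa [Real.sqrt_sq, norm_nonneg] using this
  -- kernels of adjoints coincide
  have hker : LinearMap.ker (ContinuousLinearMap.adjoint T : H →ₗ[ℂ] lp (fun _ : J => ℂ) 2)
      = LinearMap.ker (ContinuousLinearMap.adjoint K : H →ₗ[ℂ] H) := by
    ext x
    have hiff : (ContinuousLinearMap.adjoint T x = 0) ↔ (ContinuousLinearMap.adjoint K x = 0) := by
      rw [← norm_eq_zero, hnorm x, norm_eq_zero]
    simpa [LinearMap.mem_ker] using hiff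
  -- the range of K as a closed submodule
  set V : Submodule ℂ H := LinearMap.range (K : H →ₗ[ℂ] H) with hV
  have hVclosed : IsClosed (V : Set H) := by
    simpa [hV, LinearMap.coe_range] using hclosed
  have hVtc : V.topologicalClosure = V :=
    le_antisymm (Submodule.topologicalClosure_minimal V le_rfl hVclosed)
      (Submodule.le_topologicalClosure V)
  -- closures of ranges coincide
  have hcl : (LinearMap.range (T : lp (fun _ : J => ℂ) 2 →ₗ[ℂ] H)).topologicalClosure = V := by
    rw [← Submodule.orthogonal_orthogonal_eq_closure, aux_orth_range_eq_ker_adjoint, hker,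
      ← aux_orth_range_eq_ker_adjoint, Submodule.orthogonal_orthogonal_eq_closure, hVtc]
  -- R(T) ⊆ R(K)
  have hTsubK : LinearMap.range (T : lp (fun _ : J => ℂ) 2 →ₗ[ℂ] H) ≤ V := hcl ▸ Submodule.le_topologicalClosure _
  haveI : CompleteSpace V := hVclosed.completeSpace_coe
  -- K restricted to (ker K)ᗮ is a continuous linear equivalence onto V
  set W : Submodule ℂ H := LinearMap.ker (K : H →ₗ[ℂ] H) with hW
  haveI : CompleteSpace W := (ContinuousLinearMap.isClosed_ker K).completeSpace_coe
  set Kres : Wᗮ →L[ℂ] V :=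
    ContinuousLinearMap.codRestrict (K.comp Wᗮ.subtypeL) V
      (fun v => LinearMap.mem_range_self _ _) with hKres
  have hKinj : LinearMap.ker (Kres : Wᗮ →ₗ[ℂ] V) = ⊥ := by
    rw [Submodule.eq_bot_iff]
    rintro ⟨v, hv⟩ h
    have hKv : K v = 0 := by
      have := congrArg (Subtype.val) h
      exact this
    have hvW : v ∈ W := hKv
    have : ⟪v, v⟫ = 0 := hv v hvW
    have : v = 0 := by rwa [inner_self_eq_zero] at this
    simp [this]
  have hKsurj : LinearMap.range (Kres : Wᗮ →ₗ[ℂ] V) = ⊤ := by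
    rw [Submodule.eq_top_iff']
    rintro ⟨y, hy⟩
    obtain ⟨u, hu⟩ := hy
    refine ⟨⟨u - (Submodule.orthogonalProjection W u : H),
      Submodule.sub_starProjection_mem_orthogonal u⟩, ?_⟩
    apply Subtype.ext
    have : K ((Submodule.orthogonalProjection W u : H)) = 0 := (Submodule.orthogonalProjection W u).2
    change K (u - (Submodule.orthogonalProjection W u : H)) = y
    rw [map_sub, this, sub_zero]; exact hu
  set e : Wᗮ ≃L[ℂ] V := ContinuousLinearEquiv.ofBijective Kres hKinj hKsurj with he
  set C : ℝ := ‖(e.symm : V →L[ℂ] Wᗮ)‖ with hC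
  have hC0 : 0 ≤ C := hC ▸ ContinuousLinearMap.opNorm_nonneg _
  -- lower bound for the adjoint on V
  have hlow : ∀ z : V, ‖(z : H)‖ ≤ C * ‖ContinuousLinearMap.adjoint T (z : H)‖ := by
    intro z
    set v : Wᗮ := e.symm z with hv
    have hKv : K (v : H) = (z : H) := by
      have : e v = z := e.apply_symm_apply z
      have := congrArg (Subtype.val) this
      exact this
    have hvle : ‖v‖ ≤ C * ‖z‖ := (e.symm : V →L[ℂ] Wᗮ).le_opNorm z
    have h1 : ‖(z : H)‖ ^ 2
        = RCLike.re (⟪ContinuousLinearMap.adjoint K (z : H), (v : H)⟫) := by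
      rw [ContinuousLinearMap.adjoint_inner_left, hKv, inner_self_eq_norm_sq]
    have h2 : ‖(z : H)‖ ^ 2 ≤ ‖ContinuousLinearMap.adjoint K (z : H)‖ * ‖(v : H)‖ := by
      rw [h1]; exact re_inner_le_norm _ _
    have h3 : ‖(z : H)‖ ^ 2 ≤ ‖ContinuousLinearMap.adjoint K (z : H)‖ * (C * ‖z‖) := by
      refine h2.trans ?_
      exact mul_le_mul_of_nonneg_left (by simpa using hvle) (norm_nonneg _)
    rw [← hnorm] at h3
    rcases eq_or_ne (‖(z : H)‖) 0 with h0 | h0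
    · rw [h0]; positivity
    · have hpos : 0 < ‖(z : H)‖ := lt_of_le_of_ne (norm_nonneg _) (Ne.symm h0)
      have hz : ‖z‖ = ‖(z : H)‖ := rfl
      rw [hz] at h3
      nlinarith [h3]
  -- the operator B = T T* restricted to V
  set B : V →L[ℂ] V :=
    ContinuousLinearMap.codRestrict
      ((T.comp (ContinuousLinearMap.adjoint T)).comp V.subtypeL) V
      (fun x => hTsubK (LinearMap.mem_range_self _ _)) with hB
  have hBapp : ∀ x : V, (B x : H) = T (ContinuousLinearMap.adjoint T (x : H)) := fun x => rfl
  -- B is bounded below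
  have hBlow : ∀ x : V, ‖x‖ ≤ (C ^ 2) * ‖B x‖ := by
    intro x
    have h1 : RCLike.re (⟪B x, x⟫) = ‖ContinuousLinearMap.adjoint T (x : H)‖ ^ 2 := by
      rw [Submodule.coe_inner, hBapp, ← ContinuousLinearMap.adjoint_inner_right T,
        inner_self_eq_norm_sq]
    have h2 : ‖(x : H)‖ ^ 2 ≤ C ^ 2 * RCLike.re (⟪B x, x⟫) := by
      rw [h1]
      have := hlow x
      nlinarith [norm_nonneg (ContinuousLinearMap.adjoint T (x : H)), norm_nonneg (x : H)]
    have h3 : RCLike.re (⟪B x, x⟫) ≤ ‖B x‖ * ‖x‖ := re_inner_le_norm _ _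
    have hx : ‖x‖ = ‖(x : H)‖ := rfl
    rcases eq_or_ne (‖x‖) 0 with h0 | h0
    · rw [h0]; positivity
    · have hpos : 0 < ‖x‖ := lt_of_le_of_ne (norm_nonneg _) (Ne.symm h0)
      rw [← hx] at h2
      nlinarith [h2, h3, norm_nonneg (B x)]
  -- B has closed range
  have hanti : AntilipschitzWith (⟨C ^ 2, by positivity⟩ : NNReal) B :=
    ContinuousLinearMap.antilipschitz_of_bound B (by exact_mod_cast hBlow)
  have hBrangeClosed : IsClosed (Set.range B) :=
    hanti.isClosed_range B.uniformContinuous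
  -- B is surjective
  have hBinj : ∀ x : V, B x = 0 → x = 0 := by
    intro x hx
    have := hBlow x
    rw [hx] at this
    simp only [norm_zero, mul_zero] at this
    exact norm_le_zero_iff.mp this
  have hBsym : ∀ x y : V, ⟪B x, y⟫ = ⟪x, B y⟫ := by
    intro x y
    rw [Submodule.coe_inner, Submodule.coe_inner, hBapp, hBapp,
      ← ContinuousLinearMap.adjoint_inner_left T,
      ← ContinuousLinearMap.adjoint_inner_right T]
  have hBsurj : LinearMap.range (B : V →ₗ[ℂ] V) = ⊤ := by
    set U : Submodule ℂ V := LinearMap.range (B : V →ₗ[ℂ] V) with hU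
    have hUclosed : IsClosed (U : Set V) := by
      simpa [hU, LinearMap.coe_range] using hBrangeClosed
    haveI : CompleteSpace U := hUclosed.completeSpace_coe
    haveI : Submodule.HasOrthogonalProjection U := Submodule.HasOrthogonalProjection.ofCompleteSpace U
    have hUorth : Uᗮ = ⊥ := by
      rw [Submodule.eq_bot_iff]
      intro z hz
      have hBz : ∀ x : V, ⟪x, B z⟫ = 0 := by
        intro x
        rw [← hBsym]
        exact (Submodule.mem_orthogonal U z).mp hz (B x) (LinearMap.mem_range_self _ _)
      have : B z = 0 := by
        have := hBz (B z)
        rwa [inner_self_eq_zero] at this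
      exact hBinj z this
    exact Submodule.orthogonal_eq_bot_iff.mp hUorth
  -- R(K) ⊆ R(T)
  have hKsubT : ∀ y : H, y ∈ Set.range K → y ∈ Set.range T := by
    intro y hy
    have hyV : y ∈ V := hy
    have : (⟨y, hyV⟩ : V) ∈ LinearMap.range (B : V →ₗ[ℂ] V) := hBsurj ▸ Submodule.mem_top
    obtain ⟨x, hx⟩ := this
    refine ⟨ContinuousLinearMap.adjoint T (x : H), ?_⟩
    have := congrArg (Subtype.val) hx
    simpa [hBapp] using this
  have hmain : Set.range T = Set.range K := by
    apply Set.eq_of_subset_of_subset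
    · rintro _ ⟨c, rfl⟩
      exact hTsubK (LinearMap.mem_range_self _ _)
    · intro y hy
      exact hKsubT y hy
  refine ⟨hmain, fun j => ?_⟩
  rw [← hmain]
  exact ⟨lp.single 2 j 1, hT j⟩
end
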